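/- arXiv:1702.07053 — 3 statements merged into one kernel-verified Lean document; each statement's English description precedes it below -/
import Mathlib

section
/- Let d ≥ 1 and let 1 ≤ p₁ < p₂ ≤ q < ∞. Then there exists a constant C > 0 such that for every measurable function f on ℝ^d, ‖f‖_{M^{p₁}_q} ≤ C · ‖f‖_{wM^{p₂}_q}; in particular, the weak Morrey space wM^{p₂}_q is contained in the (strong) Morrey space M^{p₁}_q. -/
open MeasureTheory Metric ENNReal

/-- The Morrey norm `‖f‖_{M^p_q}` of a measurable function `f : ℝ^d → ℝ`:
`sup_{a ∈ ℝ^d, r > 0} |B(a,r)|^{1/q} · ((1/|B(a,r)|) ∫_{B(a,r)} |f(y)|^p dy)^{1/p}`. -/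
noncomputable def morreyNorm (d : ℕ) (p q : ℝ)
    (f : EuclideanSpace ℝ (Fin d) → ℝ) : ℝ≥0∞ :=
  ⨆ (a : EuclideanSpace ℝ (Fin d)) (r : ℝ) (_ : 0 < r),
    volume (ball a r) ^ (1 / q) *
      ((volume (ball a r))⁻¹ *
        ∫⁻ y in ball a r, ENNReal.ofReal (|f y| ^ p)) ^ (1 / p)

/-- The weak Morrey quasi-norm `‖f‖_{wM^p_q} := sup_{γ>0} γ · ‖χ_{{x : |f x| > γ}}‖_{M^p_q}`. -/
noncomputable def weakMorreyNorm (d : ℕ) (p q : ℝ)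
    (f : EuclideanSpace ℝ (Fin d) → ℝ) : ℝ≥0∞ :=
  ⨆ (γ : ℝ) (_ : 0 < γ),
    ENNReal.ofReal γ * morreyNorm d p q (Set.indicator {x | γ < |f x|} 1)

private lemma indicator_lintegral {d : ℕ} {E : Set (EuclideanSpace ℝ (Fin d))}
    (hE : MeasurableSet E) {p : ℝ} (hp : 0 < p) (a : EuclideanSpace ℝ (Fin d)) (r : ℝ) :
    (∫⁻ y in ball a r,
        ENNReal.ofReal (|Set.indicator E (1 : EuclideanSpace ℝ (Fin d) → ℝ) y| ^ p))
      = volume (E ∩ ball a r) := by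
  have h1 : ∀ y, ENNReal.ofReal (|Set.indicator E (1 : EuclideanSpace ℝ (Fin d) → ℝ) y| ^ p)
      = Set.indicator E (fun _ => (1 : ℝ≥0∞)) y := by
    intro y
    by_cases hy : y ∈ E
    · simp [Set.indicator_of_mem hy]
    · simp [Set.indicator_of_notMem hy, Real.zero_rpow hp.ne']
  simp_rw [h1]
  rw [MeasureTheory.lintegral_indicator hE, MeasureTheory.setLIntegral_const,
    one_mul, MeasureTheory.Measure.restrict_apply hE]

/-- If `1 ≤ p₁ < p₂ ≤ q < ∞`, then there is `C > 0` with
`‖f‖_{M^{p₁}_q} ≤ C ‖f‖_{wM^{p₂}_q}` for every measurable `f`, hence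
`wM^{p₂}_q ⊆ M^{p₁}_q`. -/
theorem weakMorrey_subset_morrey (d : ℕ) (hd : 1 ≤ d) (p₁ p₂ q : ℝ)
    (hp₁ : 1 ≤ p₁) (hp₁₂ : p₁ < p₂) (hp₂q : p₂ ≤ q) :
    ∃ C : ℝ, 0 < C ∧ ∀ f : EuclideanSpace ℝ (Fin d) → ℝ, Measurable f →
      morreyNorm d p₁ q f ≤ ENNReal.ofReal C * weakMorreyNorm d p₂ q f := by
  have hp₁0 : (0:ℝ) < p₁ := lt_of_lt_of_le zero_lt_one hp₁
  have hp₂0 : (0:ℝ) < p₂ := hp₁0.trans hp₁₂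
  have hq0 : (0:ℝ) < q := lt_of_lt_of_le hp₂0 hp₂q
  have hdiff : (0:ℝ) < p₂ - p₁ := sub_pos.mpr hp₁₂
  have hKpos : (0:ℝ) < p₁ * (1 + (p₂ - p₁)⁻¹) := by positivity
  set Kreal : ℝ := p₁ * (1 + (p₂ - p₁)⁻¹) with hKreal
  refine ⟨Kreal ^ (1 / p₁), Real.rpow_pos_of_pos hKpos _, ?_⟩
  intro f hf
  set N := weakMorreyNorm d p₂ q f with hNdef
  by_cases hNtop : N = ⊤
  · rw [hNtop, ENNReal.mul_top
      (ENNReal.ofReal_pos.mpr (Real.rpow_pos_of_pos hKpos _)).ne']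
    exact le_top
  rw [morreyNorm]
  refine iSup_le fun a => iSup_le fun r => iSup_le fun hr => ?_
  set v := volume (ball a r) with hv
  have hv0 : v ≠ 0 := (measure_ball_pos volume a hr).ne'
  have hvtop : v ≠ ⊤ := measure_ball_lt_top.ne
  have hvq0 : v ^ (1/q) ≠ 0 := (ENNReal.rpow_pos (zero_lt_iff.mpr hv0) hvtop).ne'
  have hvqtop : v ^ (1/q) ≠ ⊤ := ENNReal.rpow_ne_top_of_nonneg (by positivity) hvtop
  set u := v ^ (-(1/q)) with hu
  have hu0 : u ≠ 0 := (ENNReal.rpow_pos (zero_lt_iff.mpr hv0) hvtop).ne'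
  have hutop : u ≠ ⊤ := by
    rw [hu, ENNReal.rpow_neg]
    exact ENNReal.inv_ne_top.mpr hvq0
  -- key distribution estimate
  have key : ∀ γ : ℝ, 0 < γ →
      volume ({x | γ < |f x|} ∩ ball a r)
        ≤ N ^ p₂ * ENNReal.ofReal (γ ^ (-p₂)) * u ^ p₂ * v := by
    intro γ hγ
    have hE : MeasurableSet {x | γ < |f x|} := measurableSet_lt measurable_const hf.abs
    set X := v⁻¹ * volume ({x | γ < |f x|} ∩ ball a r) with hX
    have h2 : v ^ (1/q) * X ^ (1/p₂)
        ≤ morreyNorm d p₂ q (Set.indicator {x | γ < |f x|} 1) := by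
      rw [morreyNorm]
      refine le_iSup_of_le a (le_iSup_of_le r (le_iSup_of_le hr ?_))
      rw [indicator_lintegral hE hp₂0]
    have h1 : ENNReal.ofReal γ * (v ^ (1/q) * X ^ (1/p₂)) ≤ N := by
      refine le_trans (mul_le_mul_right h2 _) ?_
      rw [hNdef, weakMorreyNorm]
      exact le_iSup_of_le γ (le_iSup_of_le hγ le_rfl)
    have hγ0' : ENNReal.ofReal γ ≠ 0 := (ENNReal.ofReal_pos.mpr hγ).ne'
    have hb : X ^ (1/p₂) ≤ N * (ENNReal.ofReal γ)⁻¹ * (v ^ (1/q))⁻¹ := by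
      rw [mul_assoc, ← ENNReal.mul_inv (Or.inl hγ0') (Or.inl ENNReal.ofReal_ne_top),
        ← div_eq_mul_inv,
        ENNReal.le_div_iff_mul_le (Or.inl (mul_ne_zero hγ0' hvq0))
          (Or.inl (ENNReal.mul_ne_top ENNReal.ofReal_ne_top hvqtop))]
      calc X ^ (1/p₂) * (ENNReal.ofReal γ * v ^ (1/q))
          = ENNReal.ofReal γ * (v ^ (1/q) * X ^ (1/p₂)) := by ring
        _ ≤ N := h1
    have hXle : X ≤ (N * (ENNReal.ofReal γ)⁻¹ * (v ^ (1/q))⁻¹) ^ p₂ := by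
      have := ENNReal.rpow_le_rpow hb hp₂0.le
      rwa [← ENNReal.rpow_mul, one_div_mul_cancel hp₂0.ne', ENNReal.rpow_one] at this
    have hexp : (N * (ENNReal.ofReal γ)⁻¹ * (v ^ (1/q))⁻¹) ^ p₂
        = N ^ p₂ * ENNReal.ofReal (γ ^ (-p₂)) * u ^ p₂ := by
      rw [ENNReal.mul_rpow_of_ne_top (ENNReal.mul_ne_top hNtop (ENNReal.inv_ne_top.mpr hγ0'))
          (ENNReal.inv_ne_top.mpr hvq0),
        ENNReal.mul_rpow_of_ne_top hNtop (ENNReal.inv_ne_top.mpr hγ0')]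
      congr 1
      · congr 1
        rw [ENNReal.inv_rpow, ENNReal.ofReal_rpow_of_pos hγ,
          ← ENNReal.ofReal_inv_of_pos (Real.rpow_pos_of_pos hγ _), ← Real.rpow_neg hγ.le]
      · rw [hu, ENNReal.rpow_neg, ENNReal.inv_rpow]
    have hvol : volume ({x | γ < |f x|} ∩ ball a r) = v * X := by
      rw [hX, ← mul_assoc, ENNReal.mul_inv_cancel hv0 hvtop, one_mul]
    rw [hvol, mul_comm v X]
    exact mul_le_mul_left (hexp ▸ hXle) v
  by_cases hN0 : N = 0
  · -- f = 0 a.e. on the ball, integral vanishes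
    have hnull : volume ({x | 0 < |f x|} ∩ ball a r) = 0 := by
      have hsub : {x | 0 < |f x|} ∩ ball a r
          ⊆ ⋃ n : ℕ, {x | 1/((n:ℝ)+1) < |f x|} ∩ ball a r := by
        rintro x ⟨hx1, hx2⟩
        obtain ⟨n, hn⟩ := exists_nat_one_div_lt (show (0:ℝ) < |f x| from hx1)
        exact Set.mem_iUnion.mpr ⟨n, ⟨hn, hx2⟩⟩
      refine measure_mono_null hsub (measure_iUnion_null fun n => le_antisymm ?_ zero_le)
      have := key (1/((n:ℝ)+1)) (by positivity)
      rwa [hN0, ENNReal.zero_rpow_of_pos hp₂0, zero_mul, zero_mul, zero_mul] at this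
    have hI : (∫⁻ y in ball a r, ENNReal.ofReal (|f y| ^ p₁)) = 0 := by
      rw [MeasureTheory.lintegral_eq_zero_iff
        ((hf.abs.pow measurable_const).ennreal_ofReal)]
      rw [Filter.eventuallyEq_iff_exists_mem]
      refine ⟨{x | ¬ 0 < |f x|}, ?_, fun x hx => ?_⟩
      · rw [MeasureTheory.mem_ae_iff]
        have hc : {x | ¬ 0 < |f x|}ᶜ = {x | 0 < |f x|} := by ext x; simp
        rw [hc, MeasureTheory.Measure.restrict_apply
          (measurableSet_lt measurable_const hf.abs)]
        exact hnull
      · have hz : |f x| = 0 := le_antisymm (not_lt.mp hx) (abs_nonneg _)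
        simp [hz, Real.zero_rpow hp₁0.ne']
    rw [hI, mul_zero, ENNReal.zero_rpow_of_pos (by positivity), mul_zero]
    exact zero_le
  -- main case : 0 < N < ∞
  set M := N * u with hM
  have hM0 : M ≠ 0 := mul_ne_zero hN0 hu0
  have hMtop : M ≠ ⊤ := ENNReal.mul_ne_top hNtop hutop
  set γ₀ := M.toReal with hγ₀def
  have hγ₀ : 0 < γ₀ := ENNReal.toReal_pos hM0 hMtop
  have hoM : ENNReal.ofReal γ₀ = M := ENNReal.ofReal_toReal hMtop
  have hmeasE : ∀ t : ℝ, MeasurableSet {x | t < |f x|} :=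
    fun t => measurableSet_lt measurable_const hf.abs
  have lc : (∫⁻ y in ball a r, ENNReal.ofReal (|f y| ^ p₁))
      = ENNReal.ofReal p₁ * ∫⁻ t in Set.Ioi (0:ℝ),
          volume ({x | t < |f x|} ∩ ball a r) * ENNReal.ofReal (t ^ (p₁ - 1)) := by
    rw [MeasureTheory.lintegral_rpow_eq_lintegral_meas_lt_mul _
      (Filter.Eventually.of_forall fun y => abs_nonneg (f y)) hf.abs.aemeasurable hp₁0]
    congr 1
    refine MeasureTheory.lintegral_congr fun t => ?_
    rw [MeasureTheory.Measure.restrict_apply (hmeasE t)]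
  have hsplit : (∫⁻ t in Set.Ioi (0:ℝ),
        volume ({x | t < |f x|} ∩ ball a r) * ENNReal.ofReal (t ^ (p₁ - 1)))
      = (∫⁻ t in Set.Ioc (0:ℝ) γ₀,
          volume ({x | t < |f x|} ∩ ball a r) * ENNReal.ofReal (t ^ (p₁ - 1)))
        + ∫⁻ t in Set.Ioi γ₀,
          volume ({x | t < |f x|} ∩ ball a r) * ENNReal.ofReal (t ^ (p₁ - 1)) := by
    rw [← MeasureTheory.lintegral_union measurableSet_Ioi (Set.Ioc_disjoint_Ioi le_rfl),
      Set.Ioc_union_Ioi_eq_Ioi hγ₀.le]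
  have hg1 : ENNReal.ofReal (γ₀ ^ (p₁ - 1)) = M ^ (p₁ - 1) := by
    rw [← ENNReal.ofReal_rpow_of_pos hγ₀, hoM]
  have hg2 : ENNReal.ofReal (γ₀ ^ (p₁ - p₂)) = M ^ (p₁ - p₂) := by
    rw [← ENNReal.ofReal_rpow_of_pos hγ₀, hoM]
  have part1 : (∫⁻ t in Set.Ioc (0:ℝ) γ₀,
        volume ({x | t < |f x|} ∩ ball a r) * ENNReal.ofReal (t ^ (p₁ - 1)))
      ≤ v * M ^ p₁ := by
    calc (∫⁻ t in Set.Ioc (0:ℝ) γ₀,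
          volume ({x | t < |f x|} ∩ ball a r) * ENNReal.ofReal (t ^ (p₁ - 1)))
        ≤ ∫⁻ _ in Set.Ioc (0:ℝ) γ₀, v * ENNReal.ofReal (γ₀ ^ (p₁ - 1)) := by
          refine MeasureTheory.setLIntegral_mono measurable_const fun t ht => ?_
          refine mul_le_mul' (measure_mono Set.inter_subset_right)
            (ENNReal.ofReal_le_ofReal ?_)
          exact Real.rpow_le_rpow ht.1.le ht.2 (by linarith)
      _ = v * ENNReal.ofReal (γ₀ ^ (p₁ - 1)) * ENNReal.ofReal γ₀ := by
          rw [MeasureTheory.setLIntegral_const, Real.volume_Ioc, sub_zero]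
      _ = v * M ^ p₁ := by
          have h2 : ENNReal.ofReal γ₀ = M ^ (1:ℝ) := by rw [ENNReal.rpow_one, hoM]
          rw [hg1, h2, mul_assoc, ← ENNReal.rpow_add _ _ hM0 hMtop]
          norm_num
  have part2 : (∫⁻ t in Set.Ioi γ₀,
        volume ({x | t < |f x|} ∩ ball a r) * ENNReal.ofReal (t ^ (p₁ - 1)))
      ≤ v * M ^ p₁ * ENNReal.ofReal ((p₂ - p₁)⁻¹) := by
    have hctop : N ^ p₂ * u ^ p₂ * v ≠ ⊤ :=
      ENNReal.mul_ne_top (ENNReal.mul_ne_top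
        (ENNReal.rpow_ne_top_of_nonneg hp₂0.le hNtop)
        (ENNReal.rpow_ne_top_of_nonneg hp₂0.le hutop)) hvtop
    have step1 : (∫⁻ t in Set.Ioi γ₀,
          volume ({x | t < |f x|} ∩ ball a r) * ENNReal.ofReal (t ^ (p₁ - 1)))
        ≤ (N ^ p₂ * u ^ p₂ * v) * ∫⁻ t in Set.Ioi γ₀, ENNReal.ofReal (t ^ (p₁ - 1 - p₂)) := by
      rw [← MeasureTheory.lintegral_const_mul' _ _ hctop]
      refine MeasureTheory.setLIntegral_mono
        (measurable_const.mul ((measurable_id.pow measurable_const).ennreal_ofReal))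
        fun t ht => ?_
      have ht0 : (0:ℝ) < t := hγ₀.trans ht
      calc volume ({x | t < |f x|} ∩ ball a r) * ENNReal.ofReal (t ^ (p₁ - 1))
          ≤ N ^ p₂ * ENNReal.ofReal (t ^ (-p₂)) * u ^ p₂ * v * ENNReal.ofReal (t ^ (p₁ - 1)) :=
            mul_le_mul_left (key t ht0) _
        _ = (N ^ p₂ * u ^ p₂ * v) * ENNReal.ofReal (t ^ (p₁ - 1 - p₂)) := by
            rw [show p₁ - 1 - p₂ = -p₂ + (p₁ - 1) by ring, Real.rpow_add ht0,
              ENNReal.ofReal_mul (Real.rpow_nonneg ht0.le _)]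
            ring
    have hne : p₁ - p₂ ≠ 0 := by linarith
    have hint : (∫⁻ t in Set.Ioi γ₀, ENNReal.ofReal (t ^ (p₁ - 1 - p₂)))
        = ENNReal.ofReal (γ₀ ^ (p₁ - p₂) * (p₂ - p₁)⁻¹) := by
      rw [← MeasureTheory.ofReal_integral_eq_lintegral_ofReal
        (integrableOn_Ioi_rpow_of_lt (by linarith) hγ₀)
        ((MeasureTheory.ae_restrict_iff' measurableSet_Ioi).mpr
          (Filter.Eventually.of_forall fun t ht =>
            Real.rpow_nonneg (hγ₀.trans ht).le _))]
      rw [integral_Ioi_rpow_of_lt (by linarith) hγ₀]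
      congr 1
      rw [show p₁ - 1 - p₂ + 1 = p₁ - p₂ by ring, neg_div, ← div_neg, neg_sub,
        div_eq_mul_inv]
    calc (∫⁻ t in Set.Ioi γ₀,
          volume ({x | t < |f x|} ∩ ball a r) * ENNReal.ofReal (t ^ (p₁ - 1)))
        ≤ (N ^ p₂ * u ^ p₂ * v) * ENNReal.ofReal (γ₀ ^ (p₁ - p₂) * (p₂ - p₁)⁻¹) := by
          rw [← hint]; exact step1
      _ = v * M ^ p₁ * ENNReal.ofReal ((p₂ - p₁)⁻¹) := by
          rw [ENNReal.ofReal_mul (Real.rpow_nonneg hγ₀.le _), hg2, hM,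
            ENNReal.mul_rpow_of_ne_top hNtop hutop,
            ENNReal.mul_rpow_of_ne_top hNtop hutop]
          have hNcol : N ^ p₂ * N ^ (p₁ - p₂) = N ^ p₁ := by
            rw [← ENNReal.rpow_add _ _ hN0 hNtop]; ring_nf
          have hucol : u ^ p₂ * u ^ (p₁ - p₂) = u ^ p₁ := by
            rw [← ENNReal.rpow_add _ _ hu0 hutop]; ring_nf
          calc N ^ p₂ * u ^ p₂ * v
                * (N ^ (p₁ - p₂) * u ^ (p₁ - p₂) * ENNReal.ofReal ((p₂ - p₁)⁻¹))
              = (N ^ p₂ * N ^ (p₁ - p₂)) * (u ^ p₂ * u ^ (p₁ - p₂)) * v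
                  * ENNReal.ofReal ((p₂ - p₁)⁻¹) := by ring
            _ = v * (N ^ p₁ * u ^ p₁) * ENNReal.ofReal ((p₂ - p₁)⁻¹) := by
                rw [hNcol, hucol]; ring
  have hI : (∫⁻ y in ball a r, ENNReal.ofReal (|f y| ^ p₁))
      ≤ ENNReal.ofReal Kreal * (v * M ^ p₁) := by
    calc (∫⁻ y in ball a r, ENNReal.ofReal (|f y| ^ p₁))
        ≤ ENNReal.ofReal p₁ * (v * M ^ p₁ + v * M ^ p₁ * ENNReal.ofReal ((p₂ - p₁)⁻¹)) := by
          rw [lc, hsplit]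
          exact mul_le_mul_right (add_le_add part1 part2) _
      _ = ENNReal.ofReal Kreal * (v * M ^ p₁) := by
          rw [hKreal, ENNReal.ofReal_mul hp₁0.le,
            ENNReal.ofReal_add zero_le_one (by positivity), ENNReal.ofReal_one]
          ring
  -- final assembly
  have hMp₁top : M ^ p₁ ≠ ⊤ := ENNReal.rpow_ne_top_of_nonneg hp₁0.le hMtop
  have hstep : (v⁻¹ * ∫⁻ y in ball a r, ENNReal.ofReal (|f y| ^ p₁))
      ≤ ENNReal.ofReal Kreal * M ^ p₁ := by
    calc v⁻¹ * ∫⁻ y in ball a r, ENNReal.ofReal (|f y| ^ p₁)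
        ≤ v⁻¹ * (ENNReal.ofReal Kreal * (v * M ^ p₁)) := mul_le_mul_right hI _
      _ = (v⁻¹ * v) * (ENNReal.ofReal Kreal * M ^ p₁) := by ring
      _ = ENNReal.ofReal Kreal * M ^ p₁ := by
          rw [ENNReal.inv_mul_cancel hv0 hvtop, one_mul]
  calc v ^ (1/q) * (v⁻¹ * ∫⁻ y in ball a r, ENNReal.ofReal (|f y| ^ p₁)) ^ (1/p₁)
      ≤ v ^ (1/q) * (ENNReal.ofReal Kreal * M ^ p₁) ^ (1/p₁) :=
        mul_le_mul_right (ENNReal.rpow_le_rpow hstep (by positivity)) _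
    _ = v ^ (1/q) * ((ENNReal.ofReal Kreal) ^ (1/p₁) * M) := by
        rw [ENNReal.mul_rpow_of_ne_top ENNReal.ofReal_ne_top hMp₁top,
          ← ENNReal.rpow_mul, mul_one_div_cancel hp₁0.ne', ENNReal.rpow_one]
    _ = (ENNReal.ofReal Kreal) ^ (1/p₁) * N * (v ^ (1/q) * u) := by
        rw [hM]; ring
    _ = ENNReal.ofReal (Kreal ^ (1/p₁)) * N := by
        rw [hu, ← ENNReal.rpow_add _ _ hv0 hvtop, add_neg_cancel, ENNReal.rpow_zero, mul_one,
          ENNReal.ofReal_rpow_of_pos hKpos]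
end

section
/- Let d ≥ 1 and let 1 ≤ p₁ < p₂ < q < ∞. Then there exists a measurable function f on ℝ^d such that ‖f‖_{M^{p₁}_q} < ∞ and ‖f‖_{M^{p₂}_q} = ∞; that is, the inclusion M^{p₂}_q ⊆ M^{p₁}_q is proper. -/
open MeasureTheory Metric ENNReal

open NNReal Set

lemma real_rpow_add_le {x y τ : ℝ} (hx : 0 ≤ x) (hy : 0 ≤ y) (h0 : 0 ≤ τ) (h1 : τ ≤ 1) :
    (x + y) ^ τ ≤ x ^ τ + y ^ τ := by
  have h := NNReal.rpow_add_le_add_rpow (Real.toNNReal x) (Real.toNNReal y) h0 h1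
  calc (x + y) ^ τ = ((x.toNNReal + y.toNNReal : ℝ≥0) : ℝ) ^ τ := by
        rw [NNReal.coe_add, Real.coe_toNNReal _ hx, Real.coe_toNNReal _ hy]
    _ = (((x.toNNReal + y.toNNReal) ^ τ : ℝ≥0) : ℝ) := by
        rw [NNReal.coe_rpow]
    _ ≤ ((x.toNNReal ^ τ + y.toNNReal ^ τ : ℝ≥0) : ℝ) := by exact_mod_cast h
    _ = x ^ τ + y ^ τ := by
        rw [NNReal.coe_add, NNReal.coe_rpow, NNReal.coe_rpow,
          Real.coe_toNNReal _ hx, Real.coe_toNNReal _ hy]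

lemma rpow_sub_le' {a b τ : ℝ} (hb : 0 ≤ b) (hba : b ≤ a) (h0 : 0 ≤ τ) (h1 : τ ≤ 1) :
    a ^ τ - b ^ τ ≤ (a - b) ^ τ := by
  have h := real_rpow_add_le hb (sub_nonneg.2 hba) h0 h1
  rw [add_sub_cancel] at h
  linarith

lemma rpow_sub_ge {σ a b : ℝ} (hσ : 1 ≤ σ) (ha : 1 ≤ a) (hab : a ≤ b) :
    b - a ≤ b ^ σ - a ^ σ := by
  have hb : 1 ≤ b := ha.trans hab
  have hσ1 : σ - 1 + 1 = σ := by ring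
  have h1 : a ^ (σ - 1) * b ≤ b ^ σ := by
    have hbσ : b ^ σ = b ^ (σ - 1) * b := by
      rw [← Real.rpow_add_one (by linarith : b ≠ 0) (σ - 1), hσ1]
    rw [hbσ]
    exact mul_le_mul_of_nonneg_right
      (Real.rpow_le_rpow (by linarith) hab (by linarith)) (by linarith)
  have h2 : a ^ σ = a ^ (σ - 1) * a := by
    rw [← Real.rpow_add_one (by linarith : a ≠ 0) (σ - 1), hσ1]
  have h3 : 1 ≤ a ^ (σ - 1) := Real.one_le_rpow ha (by linarith)
  nlinarith [mul_nonneg (sub_nonneg.2 h3) (sub_nonneg.2 hab)]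

noncomputable def ctr (σ : ℝ) (m : ℕ) : ℝ := 3 * ((m : ℝ) + 1) ^ σ

def Aset (σ : ℝ) : Set ℝ := ⋃ m : ℕ, Ioo (ctr σ m - 1/2) (ctr σ m + 1/2)

lemma measurableSet_Aset (σ : ℝ) : MeasurableSet (Aset σ) :=
  MeasurableSet.iUnion fun _ => measurableSet_Ioo

lemma ctr_ge {σ : ℝ} (hσ : 1 ≤ σ) (m : ℕ) : 3 * ((m : ℝ) + 1) ≤ ctr σ m := by
  have h1 : (1 : ℝ) ≤ (m : ℝ) + 1 := by have : (0:ℝ) ≤ m := Nat.cast_nonneg m; linarith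
  have := Real.rpow_le_rpow_of_exponent_le h1 hσ
  rw [Real.rpow_one] at this
  unfold ctr; linarith

lemma ctr_gap {σ : ℝ} (hσ : 1 ≤ σ) {m m' : ℕ} (h : m < m') :
    ctr σ m + 3 ≤ ctr σ m' := by
  have h1 : (1 : ℝ) ≤ (m : ℝ) + 1 := by have : (0:ℝ) ≤ m := Nat.cast_nonneg m; linarith
  have h2 : (m : ℝ) + 1 ≤ (m' : ℝ) + 1 := by
    have : (m : ℝ) ≤ m' := by exact_mod_cast h.le
    linarith
  have h3 : (1 : ℝ) ≤ (m' : ℝ) - m := by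
    have : (m : ℝ) + 1 ≤ m' := by exact_mod_cast h
    linarith
  have := rpow_sub_ge hσ h1 h2
  unfold ctr; nlinarith

lemma one_le_cast_add_one (m : ℕ) : (1 : ℝ) ≤ (m : ℝ) + 1 := by
  have : (0:ℝ) ≤ m := Nat.cast_nonneg m; linarith

lemma ctr_rpow_tau {σ τ : ℝ} (hστ : σ * τ = 1) (m : ℕ) :
    (((m : ℝ) + 1) ^ σ) ^ τ = (m : ℝ) + 1 := by
  rw [← Real.rpow_mul (by have := one_le_cast_add_one m; linarith), hστ, Real.rpow_one]

lemma Aset_vol_upper {σ τ : ℝ} (hσ : 1 ≤ σ) (hτ0 : 0 < τ) (hτ1 : τ ≤ 1) (hστ : σ * τ = 1)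
    {u v : ℝ} (huv : u ≤ v) :
    volume (Aset σ ∩ Ioo u v) ≤ ENNReal.ofReal (1 + (v - u + 1) ^ τ) := by
  classical
  set N : ℕ := ⌈(v + 1/2) / 3⌉₊ with hN
  set T : Finset ℕ := (Finset.range N).filter
      (fun m => u - 1/2 < ctr σ m ∧ ctr σ m < v + 1/2) with hT
  have hsub : Aset σ ∩ Ioo u v ⊆ ⋃ m ∈ T, Ioo (ctr σ m - 1/2) (ctr σ m + 1/2) := by
    rintro y ⟨hyA, hyI⟩
    rcases mem_iUnion.1 hyA with ⟨m, hym⟩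
    have h1 : u - 1/2 < ctr σ m := by
      have := hym.2; have := hyI.1; simp only [mem_Ioo] at hym; linarith [hym.1, hym.2, hyI.1]
    have h2 : ctr σ m < v + 1/2 := by
      simp only [mem_Ioo] at hym; linarith [hym.1, hym.2, hyI.2]
    have hmN : m ∈ Finset.range N := by
      have hg := ctr_ge hσ m
      have : 3 * ((m:ℝ) + 1) < v + 1/2 := lt_of_le_of_lt hg h2
      have hlt : (m : ℝ) < (v + 1/2) / 3 := by linarith
      exact Finset.mem_range.2 (Nat.lt_ceil.2 (by exact_mod_cast hlt))
    exact mem_iUnion₂.2 ⟨m, Finset.mem_filter.2 ⟨hmN, h1, h2⟩, hym⟩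
  have hmeas : volume (Aset σ ∩ Ioo u v) ≤ (T.card : ℝ≥0∞) := by
    calc volume (Aset σ ∩ Ioo u v)
        ≤ volume (⋃ m ∈ T, Ioo (ctr σ m - 1/2) (ctr σ m + 1/2)) := measure_mono hsub
      _ ≤ ∑ m ∈ T, volume (Ioo (ctr σ m - 1/2) (ctr σ m + 1/2)) := measure_biUnion_finset_le T _
      _ = ∑ m ∈ T, 1 := by
          refine Finset.sum_congr rfl (fun m _ => ?_)
          rw [Real.volume_Ioo]
          norm_num
      _ = (T.card : ℝ≥0∞) := by simp
  refine hmeas.trans ?_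
  have hvu : (0:ℝ) ≤ v - u + 1 := by linarith
  by_cases hTne : T.Nonempty
  · set m₀ := T.min' hTne with hm₀
    set K : ℕ := ⌊(v - u + 1) ^ τ⌋₊ with hK
    have hsubT : T ⊆ Finset.Icc m₀ (m₀ + K) := by
      intro m hm
      have hle : m₀ ≤ m := T.min'_le m hm
      have hm₀T : m₀ ∈ T := T.min'_mem hTne
      have h1 := (Finset.mem_filter.1 hm).2
      have h2 := (Finset.mem_filter.1 hm₀T).2
      -- (m : ℝ) - m₀ ≤ (v - u + 1)^τ
      have hmono : ((m₀:ℝ) + 1) ^ σ ≤ ((m:ℝ) + 1) ^ σ := by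
        apply Real.rpow_le_rpow (by linarith [one_le_cast_add_one m₀])
          (by exact_mod_cast Nat.succ_le_succ hle) (by linarith)
      have hdiff : ((m:ℝ) + 1) ^ σ - ((m₀:ℝ) + 1) ^ σ ≤ (v - u + 1) / 3 := by
        have : ctr σ m - ctr σ m₀ ≤ (v + 1/2) - (u - 1/2) := by linarith [h1.2, h2.1]
        unfold ctr at this; linarith
      have hstep : (m:ℝ) - m₀ ≤ (v - u + 1) ^ τ := by
        have e1 : ((((m:ℝ) + 1) ^ σ) ^ τ) - ((((m₀:ℝ) + 1) ^ σ) ^ τ)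
            ≤ ((((m:ℝ) + 1) ^ σ) - (((m₀:ℝ) + 1) ^ σ)) ^ τ :=
          rpow_sub_le' (by positivity) hmono hτ0.le hτ1
        rw [ctr_rpow_tau hστ m, ctr_rpow_tau hστ m₀] at e1
        have e2 : ((((m:ℝ) + 1) ^ σ) - (((m₀:ℝ) + 1) ^ σ)) ^ τ ≤ (v - u + 1) ^ τ := by
          apply Real.rpow_le_rpow (by linarith) (hdiff.trans (by linarith)) hτ0.le
        linarith
      have : m ≤ m₀ + K := by
        have : (m:ℝ) ≤ (m₀:ℝ) + (v - u + 1) ^ τ := by linarith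
        have hfloor : m - m₀ ≤ K := by
          apply Nat.le_floor
          push_cast
          have hc : ((m - m₀ : ℕ) : ℝ) = (m:ℝ) - m₀ := by
            push_cast [Nat.cast_sub hle]; ring
          rw [hc]
          linarith
        omega
      exact Finset.mem_Icc.2 ⟨hle, this⟩
    have hcard : T.card ≤ K + 1 := by
      have := Finset.card_le_card hsubT
      rw [Nat.card_Icc] at this
      omega
    calc (T.card : ℝ≥0∞) ≤ ((K + 1 : ℕ) : ℝ≥0∞) := by exact_mod_cast hcard
      _ = ENNReal.ofReal ((K + 1 : ℕ) : ℝ) := by rw [ENNReal.ofReal_natCast]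
      _ ≤ ENNReal.ofReal (1 + (v - u + 1) ^ τ) := by
          apply ENNReal.ofReal_le_ofReal
          push_cast
          have hfl : (K : ℝ) ≤ (v - u + 1) ^ τ := Nat.floor_le (by positivity)
          linarith
  · have : T.card = 0 := by
      simp [Finset.not_nonempty_iff_eq_empty.1 hTne]
    rw [this]
    simp

lemma Aset_vol_lower {σ τ : ℝ} (hσ : 1 ≤ σ) (hτ0 : 0 < τ) (hτ1 : τ ≤ 1) (hστ : σ * τ = 1)
    {L : ℝ} (hL : 1 ≤ L) :
    ENNReal.ofReal (((L - 1)/3) ^ τ - 1) ≤ volume (Aset σ ∩ Ioo (-L) L) := by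
  classical
  set M : ℕ := ⌊((L - 1)/3) ^ τ⌋₊ with hM
  have hsub : ∀ m ∈ Finset.range M,
      Ioo (ctr σ m - 1/2) (ctr σ m + 1/2) ⊆ Aset σ ∩ Ioo (-L) L := by
    intro m hm y hy
    have hmM : (m : ℝ) + 1 ≤ ((L - 1)/3) ^ τ := by
      have h1 : m + 1 ≤ M := Finset.mem_range.1 hm
      have h2 : (M : ℝ) ≤ ((L - 1)/3) ^ τ :=
        Nat.floor_le (Real.rpow_nonneg (by linarith) _)
      have : ((m + 1 : ℕ) : ℝ) ≤ (M : ℝ) := by exact_mod_cast h1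
      push_cast at this
      linarith
    have hctr : ctr σ m ≤ L - 1 := by
      have h3 : ((m:ℝ) + 1) ^ σ ≤ (((L - 1)/3) ^ τ) ^ σ :=
        Real.rpow_le_rpow (by linarith [one_le_cast_add_one m]) hmM (by linarith)
      have h4 : (((L - 1)/3) ^ τ) ^ σ = (L - 1)/3 := by
        rw [← Real.rpow_mul (by linarith : (0:ℝ) ≤ (L - 1)/3), mul_comm τ σ, hστ, Real.rpow_one]
      unfold ctr
      rw [h4] at h3
      linarith
    have hctr2 : (0:ℝ) < ctr σ m := by
      have := ctr_ge hσ m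
      have := one_le_cast_add_one m
      linarith
    constructor
    · exact mem_iUnion.2 ⟨m, hy⟩
    · simp only [mem_Ioo] at hy ⊢
      constructor <;> [linarith [hy.1]; linarith [hy.2]]
  have hdisj : (↑(Finset.range M) : Set ℕ).PairwiseDisjoint
      (fun m => Ioo (ctr σ m - 1/2) (ctr σ m + 1/2)) := by
    intro a _ b _ hab
    rcases lt_or_gt_of_ne hab with h | h
    · have := ctr_gap hσ h
      apply Set.disjoint_left.2
      intro y hy1 hy2
      simp only [mem_Ioo] at hy1 hy2
      linarith [hy1.2, hy2.1]
    · have := ctr_gap hσ h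
      apply Set.disjoint_left.2
      intro y hy1 hy2
      simp only [mem_Ioo] at hy1 hy2
      linarith [hy1.1, hy2.2]
  calc ENNReal.ofReal (((L - 1)/3) ^ τ - 1) ≤ (M : ℝ≥0∞) := by
        rw [← ENNReal.ofReal_natCast M]
        apply ENNReal.ofReal_le_ofReal
        have := Nat.lt_floor_add_one (((L - 1)/3) ^ τ)
        push_cast
        linarith
    _ = ∑ m ∈ Finset.range M, volume (Ioo (ctr σ m - 1/2) (ctr σ m + 1/2)) := by
        have heach : ∀ m ∈ Finset.range M,
            volume (Ioo (ctr σ m - 1/2) (ctr σ m + 1/2)) = 1 := by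
          intro m _
          have hone : ctr σ m + 1/2 - (ctr σ m - 1/2) = 1 := by ring
          rw [Real.volume_Ioo, hone, ENNReal.ofReal_one]
        rw [Finset.sum_congr rfl heach]
        simp
    _ = volume (⋃ m ∈ Finset.range M, Ioo (ctr σ m - 1/2) (ctr σ m + 1/2)) :=
        (measure_biUnion_finset hdisj (fun m _ => measurableSet_Ioo)).symm
    _ ≤ volume (Aset σ ∩ Ioo (-L) L) := by
        apply measure_mono
        exact iUnion₂_subset hsub

lemma volume_coord_set (d : ℕ) (T : Fin d → Set ℝ) (hT : ∀ i, MeasurableSet (T i)) :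
    volume {x : EuclideanSpace ℝ (Fin d) | ∀ i, x i ∈ T i} = ∏ i, volume (T i) := by
  have hpre : (MeasurableEquiv.toLp 2 (Fin d → ℝ)).symm ⁻¹' (Set.univ.pi T)
      = {x : EuclideanSpace ℝ (Fin d) | ∀ i, x i ∈ T i} := by
    ext x
    simp [Set.mem_pi]
  rw [← hpre,
    (EuclideanSpace.volume_preserving_symm_measurableEquiv_toLp (Fin d)).measure_preimage
      (MeasurableSet.univ_pi hT).nullMeasurableSet,
    volume_pi_pi]

lemma prod_split {M : Type*} [CommMonoid M] {d jn : ℕ} (h : jn + 1 ≤ d) (F : ℕ → M) (B : M)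
    (hmid : ∀ k, 1 ≤ k → k ≤ jn → F k = B) (htail : ∀ k, jn < k → F k = 1) :
    ∏ k ∈ Finset.range d, F k = F 0 * B ^ jn := by
  rw [← Finset.prod_range_mul_prod_Ico F h]
  have h2 : ∏ k ∈ Finset.Ico (jn+1) d, F k = 1 :=
    Finset.prod_eq_one fun k hk => htail k (Finset.mem_Ico.1 hk).1
  rw [h2, mul_one, Finset.prod_range_succ']
  have h3 : ∏ k ∈ Finset.range jn, F (k + 1) = B ^ jn := by
    rw [Finset.prod_congr rfl (fun k hk => hmid (k+1) (Nat.succ_le_succ (Nat.zero_le k))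
      (Nat.succ_le_of_lt (Finset.mem_range.1 hk))), Finset.prod_const, Finset.card_range]
  rw [h3, mul_comm]

lemma term_le_ofReal {q p : ℝ} (hq : 0 < q) (hp : 0 < p) {v β : ℝ} (hv : 0 < v) (hβ : 0 ≤ β)
    {V I : ℝ≥0∞} (hV : V = ENNReal.ofReal v) (hI : I ≤ ENNReal.ofReal β) :
    V ^ (1/q) * (V⁻¹ * I) ^ (1/p) ≤ ENNReal.ofReal (v ^ (1/q) * (β / v) ^ (1/p)) := by
  subst hV
  have h1 : (ENNReal.ofReal v)⁻¹ * I ≤ ENNReal.ofReal (β / v) := by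
    calc (ENNReal.ofReal v)⁻¹ * I ≤ (ENNReal.ofReal v)⁻¹ * ENNReal.ofReal β :=
          mul_le_mul' le_rfl hI
      _ = ENNReal.ofReal v⁻¹ * ENNReal.ofReal β := by rw [ENNReal.ofReal_inv_of_pos hv]
      _ = ENNReal.ofReal (v⁻¹ * β) := (ENNReal.ofReal_mul (by positivity)).symm
      _ = ENNReal.ofReal (β / v) := by rw [div_eq_mul_inv, mul_comm]
  calc ENNReal.ofReal v ^ (1/q) * ((ENNReal.ofReal v)⁻¹ * I) ^ (1/p)
      ≤ ENNReal.ofReal v ^ (1/q) * (ENNReal.ofReal (β / v)) ^ (1/p) :=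
        mul_le_mul' le_rfl (ENNReal.rpow_le_rpow h1 (by positivity))
    _ = ENNReal.ofReal (v ^ (1/q)) * ENNReal.ofReal ((β / v) ^ (1/p)) := by
        rw [← ENNReal.ofReal_rpow_of_pos hv, ← ENNReal.ofReal_rpow_of_nonneg (by positivity)
          (by positivity)]
    _ = ENNReal.ofReal (v ^ (1/q) * (β / v) ^ (1/p)) :=
        (ENNReal.ofReal_mul (by positivity)).symm

lemma term_ge_ofReal {q p : ℝ} (hq : 0 < q) (hp : 0 < p) {v β : ℝ} (hv : 0 < v) (hβ : 0 ≤ β)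
    {V I : ℝ≥0∞} (hV : V = ENNReal.ofReal v) (hI : ENNReal.ofReal β ≤ I) :
    ENNReal.ofReal (v ^ (1/q) * (β / v) ^ (1/p)) ≤ V ^ (1/q) * (V⁻¹ * I) ^ (1/p) := by
  subst hV
  have h1 : ENNReal.ofReal (β / v) ≤ (ENNReal.ofReal v)⁻¹ * I := by
    calc ENNReal.ofReal (β / v) = ENNReal.ofReal (v⁻¹ * β) := by
          rw [div_eq_mul_inv, mul_comm]
      _ = ENNReal.ofReal v⁻¹ * ENNReal.ofReal β := ENNReal.ofReal_mul (by positivity)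
      _ = (ENNReal.ofReal v)⁻¹ * ENNReal.ofReal β := by rw [ENNReal.ofReal_inv_of_pos hv]
      _ ≤ (ENNReal.ofReal v)⁻¹ * I := mul_le_mul' le_rfl hI
  calc ENNReal.ofReal (v ^ (1/q) * (β / v) ^ (1/p))
      = ENNReal.ofReal (v ^ (1/q)) * ENNReal.ofReal ((β / v) ^ (1/p)) :=
        ENNReal.ofReal_mul (by positivity)
    _ = ENNReal.ofReal v ^ (1/q) * (ENNReal.ofReal (β / v)) ^ (1/p) := by
        rw [← ENNReal.ofReal_rpow_of_pos hv, ← ENNReal.ofReal_rpow_of_nonneg (by positivity)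
          (by positivity)]
    _ ≤ ENNReal.ofReal v ^ (1/q) * ((ENNReal.ofReal v)⁻¹ * I) ^ (1/p) :=
        mul_le_mul' le_rfl (ENNReal.rpow_le_rpow h1 (by positivity))

lemma real_term_eq (n : ℕ) {r w c s q p : ℝ} (hr : 0 < r) (hw : 0 < w) (hc : 0 < c)
    (hq : 0 < q) (hp : 0 < p) :
    (r ^ n * w) ^ (1/q) * ((c * r ^ s) / (r ^ n * w)) ^ (1/p)
      = (w ^ (1/q) * (c / w) ^ (1/p)) * r ^ ((n:ℝ)/q + (s - (n:ℝ))/p) := by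
  have hrn : (r:ℝ) ^ n = r ^ ((n:ℝ)) := (Real.rpow_natCast r n).symm
  rw [hrn]
  have h1 : c * r ^ s / (r ^ ((n:ℝ)) * w) = (c / w) * r ^ (s - (n:ℝ)) := by
    rw [Real.rpow_sub hr]
    field_simp
  rw [h1, Real.mul_rpow (by positivity) hw.le, Real.mul_rpow (by positivity) (by positivity)]
  rw [← Real.rpow_mul hr.le, ← Real.rpow_mul hr.le]
  have he : (n:ℝ)/q + (s - (n:ℝ))/p = (n:ℝ) * (1/q) + (s - (n:ℝ)) * (1/p) := by ring
  rw [he, Real.rpow_add hr]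
  ring

def Wset (d jn : ℕ) (σ : ℝ) : Fin d → Set ℝ := fun i =>
  if (i : ℕ) = 0 then Aset σ else if (i : ℕ) ≤ jn then univ else Ioo (-(1/2) : ℝ) (1/2)

def Eset (d jn : ℕ) (σ : ℝ) : Set (EuclideanSpace ℝ (Fin d)) :=
  {x | ∀ i, x i ∈ Wset d jn σ i}

lemma measurableSet_Wset (d jn : ℕ) (σ : ℝ) (i : Fin d) : MeasurableSet (Wset d jn σ i) := by
  unfold Wset
  split_ifs
  exacts [measurableSet_Aset σ, MeasurableSet.univ, measurableSet_Ioo]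

lemma measurableSet_Eset (d jn : ℕ) (σ : ℝ) : MeasurableSet (Eset d jn σ) := by
  have h : Eset d jn σ = ⋂ i, (fun x : EuclideanSpace ℝ (Fin d) => x i) ⁻¹' (Wset d jn σ i) := by
    ext x; simp [Eset]
  rw [h]
  exact MeasurableSet.iInter fun i =>
    ((measurable_pi_apply i).comp (MeasurableEquiv.toLp 2 (Fin d → ℝ)).symm.measurable)
      (measurableSet_Wset d jn σ i)

def BoxSet (d : ℕ) (a : EuclideanSpace ℝ (Fin d)) (r : ℝ) : Set (EuclideanSpace ℝ (Fin d)) :=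
  {x | ∀ i, x i ∈ Ioo (a i - r) (a i + r)}

lemma vol_Eset_inter_Box (d jn : ℕ) (σ : ℝ) (a : EuclideanSpace ℝ (Fin d)) (r : ℝ) :
    volume (Eset d jn σ ∩ BoxSet d a r)
      = ∏ i, volume (Wset d jn σ i ∩ Ioo (a i - r) (a i + r)) := by
  have h : Eset d jn σ ∩ BoxSet d a r
      = {x : EuclideanSpace ℝ (Fin d) | ∀ i, x i ∈ Wset d jn σ i ∩ Ioo (a i - r) (a i + r)} := by
    ext x
    constructor
    · rintro ⟨hxE, hxB⟩ i; exact ⟨hxE i, hxB i⟩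
    · intro h; exact ⟨fun i => (h i).1, fun i => (h i).2⟩
  rw [h]
  exact volume_coord_set d _ (fun i => (measurableSet_Wset d jn σ i).inter measurableSet_Ioo)

lemma ball_subset_Box (d : ℕ) (a : EuclideanSpace ℝ (Fin d)) (r : ℝ) :
    ball a r ⊆ BoxSet d a r := by
  intro x hx i
  have h1 : dist (x i) (a i) ≤ dist x a := by
    rw [EuclideanSpace.dist_eq x a]
    have h2 : dist (x i) (a i) ^ 2 ≤ ∑ j, dist (x j) (a j) ^ 2 :=
      Finset.single_le_sum (f := fun j => dist (x j) (a j) ^ 2)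
        (fun j _ => sq_nonneg _) (Finset.mem_univ i)
    calc dist (x i) (a i) = Real.sqrt (dist (x i) (a i) ^ 2) := (Real.sqrt_sq dist_nonneg).symm
      _ ≤ Real.sqrt (∑ j, dist (x j) (a j) ^ 2) := Real.sqrt_le_sqrt h2
  have h3 : dist (x i) (a i) < r := lt_of_le_of_lt h1 (mem_ball.1 hx)
  rw [Real.dist_eq] at h3
  have h4 := abs_lt.1 h3
  exact ⟨by linarith [h4.1], by linarith [h4.2]⟩

lemma Box_subset_ball (d : ℕ) (hd : 1 ≤ d) {R ρ : ℝ} (hρ : 0 < ρ) (hdR : (d:ℝ) * ρ < R) :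
    BoxSet d 0 ρ ⊆ ball (0 : EuclideanSpace ℝ (Fin d)) R := by
  intro x hx
  have hd0 : (1:ℝ) ≤ (d:ℝ) := by exact_mod_cast hd
  have hxi : ∀ i, dist (x i) ((0 : EuclideanSpace ℝ (Fin d)) i) ≤ ρ := by
    intro i
    have h := hx i
    have h0 : (0 : EuclideanSpace ℝ (Fin d)) i = 0 := rfl
    rw [h0] at h
    rw [Real.dist_eq, h0, sub_zero]
    rw [mem_Ioo, zero_sub, zero_add] at h
    exact (abs_lt.2 ⟨h.1, h.2⟩).le
  rw [mem_ball, EuclideanSpace.dist_eq]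
  have hsum : ∑ i, dist (x i) ((0 : EuclideanSpace ℝ (Fin d)) i) ^ 2 ≤ (d:ℝ) * ρ ^ 2 := by
    calc ∑ i, dist (x i) ((0 : EuclideanSpace ℝ (Fin d)) i) ^ 2
        ≤ ∑ _i : Fin d, ρ ^ 2 :=
          Finset.sum_le_sum fun i _ => by
            have hnn : (0:ℝ) ≤ dist (x i) ((0 : EuclideanSpace ℝ (Fin d)) i) := dist_nonneg
            nlinarith [hxi i]
      _ = (d:ℝ) * ρ ^ 2 := by
          rw [Finset.sum_const, Finset.card_univ, Fintype.card_fin, nsmul_eq_mul]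
  calc Real.sqrt (∑ i, dist (x i) ((0 : EuclideanSpace ℝ (Fin d)) i) ^ 2)
      ≤ Real.sqrt ((d:ℝ) * ρ ^ 2) := Real.sqrt_le_sqrt hsum
    _ ≤ Real.sqrt (((d:ℝ) * ρ) ^ 2) := Real.sqrt_le_sqrt (by nlinarith)
    _ = (d:ℝ) * ρ := Real.sqrt_sq (by positivity)
    _ < R := hdR

lemma prod_up {d jn : ℕ} {σ τ : ℝ} (hjnd : jn + 1 ≤ d)
    (hσ : 1 ≤ σ) (hτ0 : 0 < τ) (hτ1 : τ ≤ 1) (hστ : σ * τ = 1)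
    (a : EuclideanSpace ℝ (Fin d)) {r : ℝ} (hr : 0 < r) :
    volume (Eset d jn σ ∩ BoxSet d a r)
      ≤ ENNReal.ofReal ((1 + (2*r+1) ^ τ) * (2*r) ^ jn) := by
  rw [vol_Eset_inter_Box]
  have hfac : ∀ i : Fin d, volume (Wset d jn σ i ∩ Ioo (a i - r) (a i + r))
      ≤ ENNReal.ofReal (if (i:ℕ) = 0 then 1 + (2*r+1) ^ τ else if (i:ℕ) ≤ jn then 2*r else 1) := by
    intro i
    unfold Wset
    split_ifs with h1 h2
    · have h := Aset_vol_upper hσ hτ0 hτ1 hστ (u := a i - r) (v := a i + r) (by linarith)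
      have harg : a i + r - (a i - r) + 1 = 2*r + 1 := by ring
      rw [harg] at h
      exact h
    · rw [univ_inter, Real.volume_Ioo]
      apply le_of_eq
      congr 1
      ring
    · calc volume (Ioo (-(1/2):ℝ) (1/2) ∩ Ioo (a i - r) (a i + r))
          ≤ volume (Ioo (-(1/2):ℝ) (1/2)) := measure_mono inter_subset_left
        _ = ENNReal.ofReal 1 := by rw [Real.volume_Ioo]; norm_num
  calc ∏ i, volume (Wset d jn σ i ∩ Ioo (a i - r) (a i + r))
      ≤ ∏ i : Fin d, ENNReal.ofReal
          (if (i:ℕ) = 0 then 1 + (2*r+1) ^ τ else if (i:ℕ) ≤ jn then 2*r else 1) :=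
        Finset.prod_le_prod' (fun i _ => hfac i)
    _ = ∏ k ∈ Finset.range d, ENNReal.ofReal
          (if k = 0 then 1 + (2*r+1) ^ τ else if k ≤ jn then 2*r else 1) :=
        Fin.prod_univ_eq_prod_range
          (fun k => ENNReal.ofReal (if k = 0 then 1 + (2*r+1) ^ τ else if k ≤ jn then 2*r else 1)) d
    _ = ENNReal.ofReal (1 + (2*r+1) ^ τ) * ENNReal.ofReal (2*r) ^ jn := by
        rw [prod_split hjnd _ (ENNReal.ofReal (2*r))
          (fun k hk1 hk2 => by rw [if_neg (by omega), if_pos hk2])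
          (fun k hk => by rw [if_neg (by omega), if_neg (by omega), ENNReal.ofReal_one])]
        norm_num
    _ = ENNReal.ofReal ((1 + (2*r+1) ^ τ) * (2*r) ^ jn) := by
        rw [← ENNReal.ofReal_pow (by linarith), ← ENNReal.ofReal_mul (by positivity)]

lemma prod_lo {d jn : ℕ} {σ τ : ℝ} (hjnd : jn + 1 ≤ d)
    (hσ : 1 ≤ σ) (hτ0 : 0 < τ) (hτ1 : τ ≤ 1) (hστ : σ * τ = 1)
    {ρ : ℝ} (hρ : 6 * (2:ℝ) ^ σ + 2 ≤ ρ) :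
    ENNReal.ofReal ((((ρ-1)/3) ^ τ - 1) * (2*ρ) ^ jn)
      ≤ volume (Eset d jn σ ∩ BoxSet d 0 ρ) := by
  have h2σ : (1:ℝ) ≤ (2:ℝ) ^ σ := Real.one_le_rpow one_le_two (by linarith)
  have hρ2 : (8:ℝ) ≤ ρ := by linarith
  rw [vol_Eset_inter_Box]
  have hzero : ∀ i : Fin d, ((0 : EuclideanSpace ℝ (Fin d)) i - ρ) = -ρ := by
    intro i; norm_num [show (0 : EuclideanSpace ℝ (Fin d)) i = 0 from rfl]
  have hzero' : ∀ i : Fin d, ((0 : EuclideanSpace ℝ (Fin d)) i + ρ) = ρ := by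
    intro i; norm_num [show (0 : EuclideanSpace ℝ (Fin d)) i = 0 from rfl]
  have hfac : ∀ i : Fin d, ENNReal.ofReal
      (if (i:ℕ) = 0 then ((ρ-1)/3) ^ τ - 1 else if (i:ℕ) ≤ jn then 2*ρ else 1)
      ≤ volume (Wset d jn σ i ∩ Ioo ((0 : EuclideanSpace ℝ (Fin d)) i - ρ)
          ((0 : EuclideanSpace ℝ (Fin d)) i + ρ)) := by
    intro i
    rw [hzero i, hzero' i]
    unfold Wset
    split_ifs with h1 h2
    · exact Aset_vol_lower hσ hτ0 hτ1 hστ (by linarith)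
    · rw [univ_inter, Real.volume_Ioo]
      apply le_of_eq
      congr 1
      ring
    · have hsub : Ioo (-(1/2):ℝ) (1/2) ∩ Ioo (-ρ) ρ = Ioo (-(1/2):ℝ) (1/2) :=
        inter_eq_left.2 (Ioo_subset_Ioo (by linarith) (by linarith))
      rw [hsub, Real.volume_Ioo]
      apply le_of_eq
      congr 1
      norm_num
  calc ENNReal.ofReal ((((ρ-1)/3) ^ τ - 1) * (2*ρ) ^ jn)
      = ENNReal.ofReal (((ρ-1)/3) ^ τ - 1) * ENNReal.ofReal (2*ρ) ^ jn := by
        rw [← ENNReal.ofReal_pow (by linarith), ← ENNReal.ofReal_mul ?hnn]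
        case hnn =>
          have : (2:ℝ) ≤ ((ρ-1)/3) ^ τ := by
            have hb : (2:ℝ) ^ σ ≤ (ρ-1)/3 := by linarith
            calc (2:ℝ) = ((2:ℝ) ^ σ) ^ τ := by
                  rw [← Real.rpow_mul (by norm_num), hστ, Real.rpow_one]
              _ ≤ ((ρ-1)/3) ^ τ := Real.rpow_le_rpow (by positivity) hb hτ0.le
          linarith
    _ = ∏ k ∈ Finset.range d, ENNReal.ofReal
          (if k = 0 then ((ρ-1)/3) ^ τ - 1 else if k ≤ jn then 2*ρ else 1) := by
        rw [prod_split hjnd _ (ENNReal.ofReal (2*ρ))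
          (fun k hk1 hk2 => by rw [if_neg (by omega), if_pos hk2])
          (fun k hk => by rw [if_neg (by omega), if_neg (by omega), ENNReal.ofReal_one])]
        norm_num
    _ = ∏ i : Fin d, ENNReal.ofReal
          (if (i:ℕ) = 0 then ((ρ-1)/3) ^ τ - 1 else if (i:ℕ) ≤ jn then 2*ρ else 1) :=
        (Fin.prod_univ_eq_prod_range
          (fun k => ENNReal.ofReal (if k = 0 then ((ρ-1)/3) ^ τ - 1 else if k ≤ jn then 2*ρ else 1)) d).symm
    _ ≤ ∏ i, volume (Wset d jn σ i ∩ Ioo ((0 : EuclideanSpace ℝ (Fin d)) i - ρ)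
          ((0 : EuclideanSpace ℝ (Fin d)) i + ρ)) := Finset.prod_le_prod' (fun i _ => hfac i)

lemma lintegral_indicator_rpow {d : ℕ} {E : Set (EuclideanSpace ℝ (Fin d))}
    (hE : MeasurableSet E) {p : ℝ} (hp : 0 < p) (B : Set (EuclideanSpace ℝ (Fin d))) :
    (∫⁻ y in B, ENNReal.ofReal (|E.indicator 1 y| ^ p)) = volume (E ∩ B) := by
  have hpt : (fun y => ENNReal.ofReal (|E.indicator (1 : EuclideanSpace ℝ (Fin d) → ℝ) y| ^ p))
      = fun y => E.indicator (fun _ => (1:ℝ≥0∞)) y := by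
    funext y
    by_cases hy : y ∈ E
    · simp [Set.indicator_of_mem hy]
    · simp [Set.indicator_of_notMem hy, Real.zero_rpow hp.ne']
  simp_rw [hpt]
  rw [lintegral_indicator hE, setLIntegral_one, Measure.restrict_apply hE]


set_option maxHeartbeats 1600000

/-- If `1 ≤ p₁ < p₂ < q < ∞`, the inclusion `M^{p₂}_q ⊆ M^{p₁}_q` is proper: there is
a measurable `f` with `‖f‖_{M^{p₁}_q} < ∞` and `‖f‖_{M^{p₂}_q} = ∞`. -/
theorem morrey_inclusion_proper (d : ℕ) (hd : 1 ≤ d) (p₁ p₂ q : ℝ)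
    (hp₁ : 1 ≤ p₁) (hp₁₂ : p₁ < p₂) (hp₂q : p₂ < q) :
    ∃ f : EuclideanSpace ℝ (Fin d) → ℝ, Measurable f ∧
      morreyNorm d p₁ q f < ⊤ ∧ morreyNorm d p₂ q f = ⊤ := by
  haveI : NeZero d := ⟨by omega⟩
  have hq0 : 0 < q := by linarith
  have hp10 : 0 < p₁ := by linarith
  have hp20 : 0 < p₂ := by linarith
  have hd1 : (1:ℝ) ≤ (d:ℝ) := by exact_mod_cast hd
  have hd0' : (0:ℝ) < d := by linarith
  set s : ℝ := (d:ℝ) - (d:ℝ) * (p₁ + p₂) / (2 * q) with hs_def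
  have h2q : (0:ℝ) < 2 * q := by linarith
  have hs_pos : 0 < s := by
    rw [hs_def, sub_pos, div_lt_iff₀ h2q]
    nlinarith
  have hs_lt_d : s < (d:ℝ) := by
    rw [hs_def]
    have : 0 < (d:ℝ) * (p₁ + p₂) / (2*q) := by positivity
    linarith
  have hs_up : s < (d:ℝ) - (d:ℝ) * p₁ / q := by
    rw [hs_def, sub_lt_sub_iff_left, div_lt_div_iff₀ hq0 h2q]
    nlinarith [mul_pos (mul_pos hd0' hq0) (sub_pos.2 hp₁₂)]
  have hs_lo : (d:ℝ) - (d:ℝ) * p₂ / q < s := by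
    rw [hs_def, sub_lt_sub_iff_left, div_lt_div_iff₀ h2q hq0]
    nlinarith [mul_pos (mul_pos hd0' hq0) (sub_pos.2 hp₁₂)]
  set jn : ℕ := ⌈s⌉₊ - 1 with hjn_def
  have hceil1 : 1 ≤ ⌈s⌉₊ := Nat.ceil_pos.2 hs_pos
  have hjn_cast : (jn:ℝ) = (⌈s⌉₊ : ℝ) - 1 := by
    rw [hjn_def, Nat.cast_sub hceil1, Nat.cast_one]
  set τ : ℝ := s - jn with hτ_def
  have hτ0 : 0 < τ := by
    rw [hτ_def, hjn_cast]
    have := Nat.ceil_lt_add_one hs_pos.le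
    linarith
  have hτ1 : τ ≤ 1 := by
    rw [hτ_def, hjn_cast]
    have := Nat.le_ceil s
    linarith
  set σ : ℝ := 1/τ with hσ_def
  have hσ1 : 1 ≤ σ := by
    rw [hσ_def]
    have h := one_div_le_one_div_of_le hτ0 hτ1
    norm_num at h
    rw [one_div]
    exact h
  have hστ : σ * τ = 1 := by rw [hσ_def]; field_simp
  have hjnd : jn + 1 ≤ d := by
    have h1 : ⌈s⌉₊ ≤ d := Nat.ceil_le.2 (by exact_mod_cast hs_lt_d.le)
    omega
  have hs_eq : s = (jn:ℝ) + τ := by rw [hτ_def]; ring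
  have hEmeas := measurableSet_Eset d jn σ
  -- ball volumes
  set ω : ℝ≥0∞ := volume (ball (0 : EuclideanSpace ℝ (Fin d)) 1) with hω_def
  have hω0 : ω ≠ 0 := (measure_ball_pos volume _ one_pos).ne'
  have hωtop : ω ≠ ⊤ := measure_ball_lt_top.ne
  set w : ℝ := ω.toReal with hw_def
  have hw0 : 0 < w := ENNReal.toReal_pos hω0 hωtop
  have hVol : ∀ (a : EuclideanSpace ℝ (Fin d)) (r : ℝ), 0 < r →
      volume (ball a r) = ENNReal.ofReal (r ^ d * w) := by
    intro a r hr
    rw [Measure.addHaar_ball volume a hr.le, finrank_euclideanSpace_fin, ← hω_def,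
      ← ENNReal.ofReal_toReal hωtop, ← hw_def, ← ENNReal.ofReal_mul (by positivity)]
  -- upper volume bound
  have hEb_up : ∀ (a : EuclideanSpace ℝ (Fin d)) {r : ℝ}, 0 < r → 1 ≤ r →
      volume (Eset d jn σ ∩ ball a r) ≤ ENNReal.ofReal ((4 * 2^jn) * r ^ s) := by
    intro a r hr hr1
    have h1 : volume (Eset d jn σ ∩ ball a r) ≤ volume (Eset d jn σ ∩ BoxSet d a r) :=
      measure_mono (inter_subset_inter_right _ (ball_subset_Box d a r))
    refine h1.trans ((prod_up hjnd hσ1 hτ0 hτ1 hστ a hr).trans (ENNReal.ofReal_le_ofReal ?_))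
    have hrτ : 1 ≤ r ^ τ := Real.one_le_rpow hr1 hτ0.le
    have h2 : (2*r+1) ^ τ ≤ 3 * r ^ τ := by
      calc (2*r+1) ^ τ ≤ (3*r) ^ τ := Real.rpow_le_rpow (by linarith) (by linarith) hτ0.le
        _ = 3 ^ τ * r ^ τ := Real.mul_rpow (by norm_num) (by linarith)
        _ ≤ 3 * r ^ τ := by
            have h3 : (3:ℝ) ^ τ ≤ 3 := by
              calc (3:ℝ) ^ τ ≤ 3 ^ (1:ℝ) :=
                    Real.rpow_le_rpow_of_exponent_le (by norm_num) hτ1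
                _ = 3 := Real.rpow_one 3
            nlinarith
    have h4 : (2*r) ^ jn = 2^jn * r^jn := mul_pow 2 r jn
    have h5 : r ^ τ * r ^ (jn:ℕ) = r ^ s := by
      rw [← Real.rpow_natCast r jn, ← Real.rpow_add hr, hs_eq]
      ring_nf
    calc (1 + (2*r+1)^τ) * (2*r)^jn ≤ (4 * r^τ) * (2^jn * r^jn) :=
          mul_le_mul (by linarith) h4.le (by positivity) (by positivity)
      _ = (4*2^jn) * (r^τ * r^jn) := by ring
      _ = (4*2^jn) * r^s := by rw [h5]
  -- lower volume bound
  have hEb_lo : ∀ {R : ℝ}, 2*(d:ℝ)*(6*2^σ+2) ≤ R →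
      ENNReal.ofReal (((1/2) / (12*(d:ℝ))^s) * R ^ s)
        ≤ volume (Eset d jn σ ∩ ball 0 R) := by
    intro R hR
    have h2σ : (1:ℝ) ≤ (2:ℝ)^σ := Real.one_le_rpow one_le_two (by linarith)
    have hR16 : 16 ≤ R := by
      have h8 : (8:ℝ) ≤ 6*2^σ+2 := by linarith
      nlinarith [mul_le_mul (by linarith : (2:ℝ) ≤ 2*(d:ℝ)) h8 (by norm_num) (by linarith)]
    set ρ : ℝ := R / (2*(d:ℝ)) with hρ_def
    have hρpos : 0 < ρ := by rw [hρ_def]; positivity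
    have hρbig : 6*(2:ℝ)^σ + 2 ≤ ρ := by
      rw [hρ_def, le_div_iff₀ (by positivity)]
      nlinarith
    have hρ2 : (8:ℝ) ≤ ρ := by linarith
    have hsub : BoxSet d 0 ρ ⊆ ball (0:EuclideanSpace ℝ (Fin d)) R := by
      refine Box_subset_ball d hd hρpos ?_
      have : (d:ℝ) * ρ = R/2 := by rw [hρ_def]; field_simp
      rw [this]; linarith
    have h1 := prod_lo hjnd hσ1 hτ0 hτ1 hστ hρbig
    have h2 : volume (Eset d jn σ ∩ BoxSet d 0 ρ) ≤ volume (Eset d jn σ ∩ ball 0 R) :=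
      measure_mono (inter_subset_inter_right _ hsub)
    refine le_trans (ENNReal.ofReal_le_ofReal ?_) (h1.trans h2)
    have hx : (2:ℝ) ^ σ ≤ (ρ-1)/3 := by linarith
    have hx2 : (2:ℝ) ≤ ((ρ-1)/3) ^ τ := by
      calc (2:ℝ) = ((2:ℝ)^σ)^τ := by
            rw [← Real.rpow_mul (by norm_num), hστ, Real.rpow_one]
        _ ≤ ((ρ-1)/3)^τ := Real.rpow_le_rpow (by positivity) hx hτ0.le
    have hx3 : (ρ/6 : ℝ) ≤ (ρ-1)/3 := by linarith
    have hx4 : (ρ/6)^τ ≤ ((ρ-1)/3)^τ := Real.rpow_le_rpow (by positivity) hx3 hτ0.le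
    have hx5 : (1/2) * (ρ/6)^τ ≤ ((ρ-1)/3)^τ - 1 := by nlinarith
    have hx6 : (ρ/6)^(jn:ℕ) ≤ (2*ρ)^jn := pow_le_pow_left₀ (by positivity) (by linarith) jn
    have hx7 : (ρ/6)^τ * (ρ/6)^(jn:ℕ) = (ρ/6)^s := by
      rw [← Real.rpow_natCast (ρ/6) jn, ← Real.rpow_add (by positivity), hs_eq]
      ring_nf
    have hx8 : (ρ/6 : ℝ) = R / (12*(d:ℝ)) := by
      rw [hρ_def, div_div]
      congr 1
      ring
    have hx9 : (ρ/6)^s = R^s / (12*(d:ℝ))^s := by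
      rw [hx8]
      exact Real.div_rpow (by linarith) (by positivity) s
    calc ((1/2)/(12*(d:ℝ))^s) * R^s = (1/2) * ((ρ/6)^s) := by rw [hx9]; ring
      _ = ((1/2) * (ρ/6)^τ) * (ρ/6)^(jn:ℕ) := by rw [← hx7]; ring
      _ ≤ (((ρ-1)/3)^τ - 1) * (2*ρ)^jn :=
          mul_le_mul hx5 hx6 (pow_nonneg (by positivity) jn) (by linarith)
  refine ⟨(Eset d jn σ).indicator 1, measurable_one.indicator hEmeas, ?_, ?_⟩
  · -- finite M^{p₁}_q norm
    have hc₀0 : (0:ℝ) < 4 * 2^jn := by positivity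
    have hK0 : (0:ℝ) ≤ w^(1/q) * ((4*2^jn)/w)^(1/p₁) := by positivity
    have hC : morreyNorm d p₁ q ((Eset d jn σ).indicator 1)
        ≤ ω^(1/q) + ENNReal.ofReal (w^(1/q) * ((4*2^jn)/w)^(1/p₁)) := by
      unfold morreyNorm
      refine iSup_le fun a => iSup_le fun r => iSup_le fun hr => ?_
      rw [lintegral_indicator_rpow hEmeas hp10, hVol a r hr]
      by_cases hr1 : r ≤ 1
      · have hI : volume (Eset d jn σ ∩ ball a r) ≤ ENNReal.ofReal (r^d * w) := by
          rw [← hVol a r hr]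
          exact measure_mono inter_subset_right
        have hvne : ENNReal.ofReal (r^d*w) ≠ 0 := (ENNReal.ofReal_pos.2 (by positivity)).ne'
        have h1 : (ENNReal.ofReal (r^d*w))⁻¹ * volume (Eset d jn σ ∩ ball a r) ≤ 1 := by
          calc (ENNReal.ofReal (r^d*w))⁻¹ * volume (Eset d jn σ ∩ ball a r)
              ≤ (ENNReal.ofReal (r^d*w))⁻¹ * ENNReal.ofReal (r^d*w) := mul_le_mul' le_rfl hI
            _ = 1 := ENNReal.inv_mul_cancel hvne ENNReal.ofReal_ne_top
        calc ENNReal.ofReal (r^d*w) ^ (1/q)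
              * ((ENNReal.ofReal (r^d*w))⁻¹ * volume (Eset d jn σ ∩ ball a r)) ^ (1/p₁)
            ≤ ENNReal.ofReal (r^d*w) ^ (1/q) * 1 :=
              mul_le_mul' le_rfl (by
                calc ((ENNReal.ofReal (r^d*w))⁻¹ * volume (Eset d jn σ ∩ ball a r)) ^ (1/p₁)
                    ≤ (1:ℝ≥0∞) ^ (1/p₁) := ENNReal.rpow_le_rpow h1 (by positivity)
                  _ = 1 := ENNReal.one_rpow _)
          _ = ENNReal.ofReal (r^d*w) ^ (1/q) := mul_one _
          _ ≤ ω ^ (1/q) := by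
              refine ENNReal.rpow_le_rpow ?_ (by positivity)
              calc ENNReal.ofReal (r^d*w) ≤ ENNReal.ofReal w := by
                    apply ENNReal.ofReal_le_ofReal
                    have hrd : r^d ≤ 1 := pow_le_one₀ hr.le hr1
                    nlinarith
                _ = ω := ENNReal.ofReal_toReal hωtop
          _ ≤ _ := le_self_add
      · push_neg at hr1
        have hIβ : volume (Eset d jn σ ∩ ball a r) ≤ ENNReal.ofReal ((4*2^jn) * r^s) :=
          hEb_up a hr hr1.le
        refine le_trans (term_le_ofReal hq0 hp10 (by positivity) (by positivity) rfl hIβ) ?_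
        rw [real_term_eq d hr hw0 hc₀0 hq0 hp10]
        have he₁ : (d:ℝ)/q + (s - (d:ℝ))/p₁ ≤ 0 := by
          have h2 : s - (d:ℝ) ≤ (-((d:ℝ)/q)) * p₁ := by
            have h3 : (-((d:ℝ)/q)) * p₁ = -((d:ℝ)*p₁/q) := by ring
            rw [h3]
            linarith
          have h4 : (s - (d:ℝ))/p₁ ≤ ((-((d:ℝ)/q)) * p₁)/p₁ := (div_le_div_iff_of_pos_right hp10).2 h2
          have h5 : ((-((d:ℝ)/q)) * p₁)/p₁ = -((d:ℝ)/q) := by field_simp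
          rw [h5] at h4
          linarith
        have hre : r ^ ((d:ℝ)/q + (s - (d:ℝ))/p₁) ≤ 1 :=
          Real.rpow_le_one_of_one_le_of_nonpos hr1.le he₁
        calc ENNReal.ofReal ((w^(1/q) * ((4*2^jn)/w)^(1/p₁)) * r ^ ((d:ℝ)/q + (s - (d:ℝ))/p₁))
            ≤ ENNReal.ofReal (w^(1/q) * ((4*2^jn)/w)^(1/p₁)) := by
              apply ENNReal.ofReal_le_ofReal
              exact mul_le_of_le_one_right hK0 hre
          _ ≤ _ := le_add_self
    refine lt_of_le_of_lt hC ?_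
    exact ENNReal.add_lt_top.2
      ⟨ENNReal.rpow_lt_top_of_nonneg (by positivity) hωtop, ENNReal.ofReal_lt_top⟩
  · by_contra hne
    set c : ℝ := (morreyNorm d p₂ q ((Eset d jn σ).indicator 1)).toReal with hc_def
    have hc0 : 0 ≤ c := ENNReal.toReal_nonneg
    have h12d : (0:ℝ) < (12*(d:ℝ))^s := Real.rpow_pos_of_pos (by linarith) s
    set c₂ : ℝ := (1/2) / (12*(d:ℝ))^s with hc₂_def
    have hc₂0 : 0 < c₂ := by rw [hc₂_def]; positivity
    set ε : ℝ := (d:ℝ)/q + (s - (d:ℝ))/p₂ with hε_def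
    have hε0 : 0 < ε := by
      have h2 : (-((d:ℝ)/q)) * p₂ < s - (d:ℝ) := by
        have h3 : (-((d:ℝ)/q)) * p₂ = -((d:ℝ)*p₂/q) := by ring
        rw [h3]
        linarith
      have h4 : ((-((d:ℝ)/q)) * p₂)/p₂ < (s - (d:ℝ))/p₂ := (div_lt_div_iff_of_pos_right hp20).2 h2
      have h5 : ((-((d:ℝ)/q)) * p₂)/p₂ = -((d:ℝ)/q) := by field_simp
      rw [h5] at h4
      rw [hε_def]
      linarith
    set K₂ : ℝ := w^(1/q) * (c₂/w)^(1/p₂) with hK₂_def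
    have hK₂0 : 0 < K₂ := by rw [hK₂_def]; positivity
    set R : ℝ := max (2*(d:ℝ)*(6*2^σ+2)) (((c+1)/K₂ + 1)^(1/ε)) with hR_def
    have hRbig : 2*(d:ℝ)*(6*2^σ+2) ≤ R := le_max_left _ _
    have h2σ : (1:ℝ) ≤ (2:ℝ)^σ := Real.one_le_rpow one_le_two (by linarith)
    have hR0 : 0 < R := by
      have h8 : (8:ℝ) ≤ 6*2^σ+2 := by linarith
      have h16 : (16:ℝ) ≤ 2*(d:ℝ)*(6*2^σ+2) := by nlinarith
      linarith
    have hI0 := hEb_lo hRbig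
    have hI : ENNReal.ofReal (c₂ * R^s)
        ≤ ∫⁻ y in ball (0 : EuclideanSpace ℝ (Fin d)) R,
            ENNReal.ofReal (|(Eset d jn σ).indicator 1 y| ^ p₂) := by
      rw [lintegral_indicator_rpow hEmeas hp20, hc₂_def]
      exact hI0
    have hterm := term_ge_ofReal hq0 hp20 (v := R^d*w) (β := c₂ * R^s)
        (by positivity) (by positivity) (hVol 0 R hR0) hI
    have hle : volume (ball (0 : EuclideanSpace ℝ (Fin d)) R) ^ (1/q) *
        ((volume (ball (0 : EuclideanSpace ℝ (Fin d)) R))⁻¹ *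
          ∫⁻ y in ball (0 : EuclideanSpace ℝ (Fin d)) R,
            ENNReal.ofReal (|(Eset d jn σ).indicator 1 y| ^ p₂)) ^ (1/p₂)
        ≤ morreyNorm d p₂ q ((Eset d jn σ).indicator 1) := by
      unfold morreyNorm
      exact le_iSup_of_le 0 (le_iSup_of_le R (le_iSup_of_le hR0 le_rfl))
    have hchain : ENNReal.ofReal (K₂ * R^ε)
        ≤ morreyNorm d p₂ q ((Eset d jn σ).indicator 1) := by
      have heq := real_term_eq d (r := R) (w := w) (c := c₂) (s := s) (q := q) (p := p₂)
        hR0 hw0 hc₂0 hq0 hp20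
      calc ENNReal.ofReal (K₂ * R^ε)
          = ENNReal.ofReal ((R^d*w)^(1/q) * ((c₂*R^s)/(R^d*w))^(1/p₂)) := by
            rw [heq, hK₂_def, hε_def]
        _ ≤ _ := le_trans hterm hle
    have hR1 : ((c+1)/K₂ + 1)^(1/ε) ≤ R := le_max_right _ _
    have hbase : (0:ℝ) ≤ (c+1)/K₂ + 1 := by positivity
    have hRε : (c+1)/K₂ ≤ R^ε := by
      calc (c+1)/K₂ ≤ (c+1)/K₂ + 1 := by linarith
        _ = (((c+1)/K₂ + 1)^(1/ε))^ε := by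
            rw [← Real.rpow_mul hbase]
            have hcan : (1/ε)*ε = 1 := by field_simp
            rw [hcan, Real.rpow_one]
        _ ≤ R^ε := Real.rpow_le_rpow (Real.rpow_nonneg hbase _) hR1 hε0.le
    have hKR : c + 1 ≤ K₂ * R^ε := by
      rw [div_le_iff₀ hK₂0] at hRε
      linarith
    have hup2 : ENNReal.ofReal (K₂ * R^ε) ≤ ENNReal.ofReal c := by
      rw [← ENNReal.ofReal_toReal hne] at hchain
      exact hchain
    have hfin : K₂ * R^ε ≤ c := (ENNReal.ofReal_le_ofReal_iff hc0).1 hup2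
    linarith
end

section
/- Let d ≥ 1 and let 1 ≤ p₁ < p₂ < q < ∞. Then there exists a measurable function f on ℝ^d such that ‖f‖_{M^{p₁}_q} < ∞ and ‖f‖_{wM^{p₂}_q} = ∞; that is, the inclusion wM^{p₂}_q ⊆ M^{p₁}_q is proper. -/
open MeasureTheory Metric ENNReal

noncomputable def pt (d : ℕ) (s : ℝ) (n : Fin d → ℕ) : EuclideanSpace ℝ (Fin d) :=
  WithLp.toLp 2 (fun i => ((n i : ℝ) + 1) ^ s)

noncomputable def Ebad (d : ℕ) (s : ℝ) : Set (EuclideanSpace ℝ (Fin d)) :=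
  ⋃ n : Fin d → ℕ, ball (pt d s n) (1/2)

lemma Ebad_meas (d : ℕ) (s : ℝ) : MeasurableSet (Ebad d s) :=
  MeasurableSet.iUnion fun _ => measurableSet_ball

lemma coord_le_dist {d : ℕ} (x y : EuclideanSpace ℝ (Fin d)) (i : Fin d) :
    |x i - y i| ≤ dist x y := by
  rw [EuclideanSpace.dist_eq, ← Real.sqrt_sq_eq_abs]
  apply Real.sqrt_le_sqrt
  have h : dist (x i) (y i) ^ 2 = (x i - y i)^2 := by rw [Real.dist_eq, sq_abs]
  calc (x i - y i)^2 = dist (x i) (y i) ^ 2 := h.symm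
    _ ≤ ∑ j, dist (x j) (y j) ^ 2 :=
        Finset.single_le_sum (f := fun j => dist (x j) (y j) ^ 2)
          (fun j _ => sq_nonneg _) (Finset.mem_univ i)

lemma superadd {a b p : ℝ} (ha : 0 ≤ a) (hb : 0 ≤ b) (hp : 1 ≤ p) : a^p + b^p ≤ (a+b)^p := by
  lift a to NNReal using ha
  lift b to NNReal using hb
  exact_mod_cast NNReal.add_rpow_le_rpow_add a b hp

lemma gap {s : ℝ} (hs : 1 ≤ s) {m k : ℕ} (h : m ≤ k) :
    ((k : ℝ) - m) ^ s ≤ ((k:ℝ)+1)^s - ((m:ℝ)+1)^s := by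
  have hm : (0:ℝ) ≤ (k:ℝ) - m := by
    have : (m:ℝ) ≤ k := Nat.cast_le.2 h
    linarith
  have hb : (0:ℝ) ≤ (m:ℝ) + 1 := by positivity
  have := superadd hm hb hs
  have he : ((k:ℝ) - m) + ((m:ℝ)+1) = (k:ℝ)+1 := by ring
  rw [he] at this
  linarith

lemma rpow_cancel {x t s : ℝ} (hx : 0 ≤ x) (hs : 1 ≤ s) (h : x ^ s ≤ t) : x ≤ t ^ (1/s) := by
  have hs0 : s ≠ 0 := by linarith
  have h1 : (0:ℝ) ≤ 1/s := by positivity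
  have := Real.rpow_le_rpow (Real.rpow_nonneg hx s) h h1
  rwa [← Real.rpow_mul hx, mul_one_div, div_self hs0, Real.rpow_one] at this

lemma vol_upper (d : ℕ) {s : ℝ} (hs : 1 ≤ s) (a : EuclideanSpace ℝ (Fin d)) {r : ℝ} (hr : 1 ≤ r) :
    volume (Ebad d s ∩ ball a r) ≤
      ENNReal.ofReal ((9 * r ^ (1/s)) ^ d) * volume (ball (0 : EuclideanSpace ℝ (Fin d)) 1) := by
  have hr0 : (0:ℝ) < r := lt_of_lt_of_le one_pos hr
  rcases Set.eq_empty_or_nonempty (Ebad d s ∩ ball a r) with he | ⟨y₀, hy₀E, hy₀b⟩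
  · simp [he]
  obtain ⟨n₀, hn₀⟩ : ∃ n₀, y₀ ∈ ball (pt d s n₀) (1/2) := by
    simpa [Ebad] using hy₀E
  set K : ℕ := ⌈(3*r) ^ (1/s)⌉₊ with hK
  set F : Finset (Fin d → ℕ) := Fintype.piFinset (fun i => Finset.Icc (n₀ i - K) (n₀ i + K)) with hF
  -- key: any ball meeting `ball a r` has index in `F`
  have key : ∀ n : Fin d → ℕ, (ball (pt d s n) (1/2) ∩ ball a r).Nonempty → n ∈ F := by
    rintro n ⟨z, hz1, hz2⟩
    have hdist : dist (pt d s n) (pt d s n₀) ≤ 3 * r := by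
      have h1 : dist (pt d s n) z < 1/2 := by rw [dist_comm]; exact mem_ball.1 hz1
      have h2 : dist z a < r := mem_ball.1 hz2
      have h3 : dist a y₀ < r := by rw [dist_comm]; exact mem_ball.1 hy₀b
      have h4 : dist y₀ (pt d s n₀) < 1/2 := mem_ball.1 hn₀
      have t1 : dist (pt d s n) (pt d s n₀) ≤
          dist (pt d s n) z + dist z a + dist a (pt d s n₀) := dist_triangle4 _ _ _ _
      have t2 : dist a (pt d s n₀) ≤ dist a y₀ + dist y₀ (pt d s n₀) := dist_triangle _ _ _
      linarith
    have coord : ∀ i, |((n i : ℝ)) - (n₀ i : ℝ)| ≤ (3*r) ^ (1/s) := by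
      intro i
      have hci := (coord_le_dist (pt d s n) (pt d s n₀) i).trans hdist
      have hpt : pt d s n i - pt d s n₀ i = ((n i : ℝ)+1)^s - ((n₀ i : ℝ)+1)^s := rfl
      rw [hpt] at hci
      rcases le_total (n i) (n₀ i) with hle | hle
      · have hg := gap hs hle
        have : ((n₀ i : ℝ) - n i) ^ s ≤ 3*r := by
          have := abs_le.1 hci
          linarith
        have := rpow_cancel (by
          have : (n i : ℝ) ≤ n₀ i := Nat.cast_le.2 hle
          linarith) hs this
        rw [abs_sub_comm]
        rw [abs_of_nonneg (by
          have : (n i : ℝ) ≤ n₀ i := Nat.cast_le.2 hle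
          linarith)]
        exact this
      · have hg := gap hs hle
        have : ((n i : ℝ) - n₀ i) ^ s ≤ 3*r := by
          have := abs_le.1 hci
          linarith
        have := rpow_cancel (by
          have : (n₀ i : ℝ) ≤ n i := Nat.cast_le.2 hle
          linarith) hs this
        rw [abs_of_nonneg (by
          have : (n₀ i : ℝ) ≤ n i := Nat.cast_le.2 hle
          linarith)]
        exact this
    rw [hF, Fintype.mem_piFinset]
    intro i
    have hci := coord i
    have hKc : (3*r) ^ (1/s) ≤ (K : ℝ) := Nat.le_ceil _
    have habs := abs_le.1 hci
    rw [Finset.mem_Icc]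
    constructor
    · -- n₀ i - K ≤ n i
      have : (n₀ i : ℝ) ≤ (n i : ℝ) + K := by linarith
      have : n₀ i ≤ n i + K := by exact_mod_cast this
      omega
    · -- n i ≤ n₀ i + K
      have : (n i : ℝ) ≤ (n₀ i : ℝ) + K := by linarith
      exact_mod_cast this
  have cover : Ebad d s ∩ ball a r ⊆ ⋃ n ∈ F, ball (pt d s n) (1/2) := by
    rintro z ⟨hzE, hzb⟩
    obtain ⟨n, hn⟩ : ∃ n, z ∈ ball (pt d s n) (1/2) := by simpa [Ebad] using hzE
    exact Set.mem_biUnion (key n ⟨z, hn, hzb⟩) hn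
  have hcard : F.card ≤ (2*K+1)^d := by
    rw [hF, Fintype.card_piFinset]
    calc ∏ i, (Finset.Icc (n₀ i - K) (n₀ i + K)).card ≤ ∏ _i : Fin d, (2*K+1) := by
          apply Finset.prod_le_prod'
          intro i _
          rw [Nat.card_Icc]
          omega
      _ = (2*K+1)^d := by
          rw [Finset.prod_const, Finset.card_univ, Fintype.card_fin]
  have hsmall : ∀ n : Fin d → ℕ, volume (ball (pt d s n) (1/2 : ℝ)) ≤
      volume (ball (0 : EuclideanSpace ℝ (Fin d)) 1) := by
    intro n
    rw [Measure.addHaar_ball_center]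
    exact measure_mono (ball_subset_ball (by norm_num))
  calc volume (Ebad d s ∩ ball a r) ≤ volume (⋃ n ∈ F, ball (pt d s n) (1/2)) := measure_mono cover
    _ ≤ ∑ n ∈ F, volume (ball (pt d s n) (1/2)) := measure_biUnion_finset_le F _
    _ ≤ ∑ _n ∈ F, volume (ball (0 : EuclideanSpace ℝ (Fin d)) 1) :=
        Finset.sum_le_sum fun n _ => hsmall n
    _ = (F.card : ℝ≥0∞) * volume (ball (0 : EuclideanSpace ℝ (Fin d)) 1) := by
        rw [Finset.sum_const, nsmul_eq_mul]
    _ ≤ ENNReal.ofReal ((9 * r ^ (1/s)) ^ d) * volume (ball (0 : EuclideanSpace ℝ (Fin d)) 1) := by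
        apply mul_le_mul_left
        have h1 : (F.card : ℝ≥0∞) ≤ (((2*K+1)^d : ℕ) : ℝ≥0∞) := Nat.cast_le.2 hcard
        refine h1.trans ?_
        rw [← ENNReal.ofReal_natCast]
        apply ENNReal.ofReal_le_ofReal
        push_cast
        apply pow_le_pow_left₀ (by positivity)
        -- (2K+1 : ℝ) ≤ 9 * r^(1/s)
        have hKle : (K:ℝ) ≤ (3*r)^(1/s) + 1 := (Nat.ceil_lt_add_one (by positivity)).le
        have h3 : (3*r)^(1/s) ≤ 3 * r^(1/s) := by
          rw [Real.mul_rpow (by norm_num) hr0.le]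
          have h31 : (3:ℝ)^(1/s) ≤ 3 := by
            have hle1 : 1/s ≤ (1:ℝ) := by
              rw [div_le_one (by linarith)]; linarith
            have := Real.rpow_le_rpow_of_exponent_le (x := (3:ℝ)) (by norm_num) hle1
            simpa using this
          have hrp : (0:ℝ) ≤ r^(1/s) := Real.rpow_nonneg hr0.le _
          nlinarith
        have hone : (1:ℝ) ≤ r^(1/s) := Real.one_le_rpow hr (by positivity)
        nlinarith

-- points are 1-separated
lemma pt_dist {d : ℕ} {s : ℝ} (hs : 1 ≤ s) {m n : Fin d → ℕ} (hmn : m ≠ n) :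
    1 ≤ dist (pt d s m) (pt d s n) := by
  obtain ⟨i, hi⟩ := Function.ne_iff.1 hmn
  have key : ∀ a b : Fin d → ℕ, a i < b i → 1 ≤ |pt d s a i - pt d s b i| := by
    intro a b hab
    have h1 : (1:ℝ) ≤ (b i : ℝ) - a i := by
      have : a i + 1 ≤ b i := hab
      have h2 : ((a i + 1 : ℕ) : ℝ) ≤ ((b i : ℕ) : ℝ) := Nat.cast_le.2 this
      push_cast at h2
      linarith
    have h2 : (1:ℝ) ≤ ((b i : ℝ) - a i)^s := by
      have := Real.rpow_le_rpow (by norm_num) h1 (by linarith : (0:ℝ) ≤ s)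
      rwa [Real.one_rpow] at this
    have h3 := gap hs hab.le
    have hpt : pt d s b i - pt d s a i = ((b i:ℝ)+1)^s - ((a i:ℝ)+1)^s := rfl
    rw [abs_sub_comm, hpt]
    calc (1:ℝ) ≤ ((b i:ℝ) - a i)^s := h2
      _ ≤ ((b i:ℝ)+1)^s - ((a i:ℝ)+1)^s := h3
      _ ≤ |((b i:ℝ)+1)^s - ((a i:ℝ)+1)^s| := le_abs_self _
  rcases Nat.lt_or_ge (m i) (n i) with h | h
  · exact (key m n h).trans (coord_le_dist _ _ i)
  · have h' : n i < m i := lt_of_le_of_ne h (Ne.symm hi)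
    have := (key n m h').trans (coord_le_dist _ _ i)
    rwa [dist_comm]
  
lemma pt_norm_le {d : ℕ} {s : ℝ} (hs : 1 ≤ s) {n : Fin d → ℕ} {N : ℕ}
    (hn : ∀ i, n i < N) : ‖pt d s n‖ ≤ Real.sqrt d * (N:ℝ)^s := by
  rw [EuclideanSpace.norm_eq]
  have hb : ∀ i, ‖pt d s n i‖ ^ 2 ≤ ((N:ℝ)^s)^2 := by
    intro i
    have h0 : (0:ℝ) ≤ (n i : ℝ) + 1 := by positivity
    have h1 : ((n i : ℝ) + 1) ≤ (N:ℝ) := by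
      have : n i + 1 ≤ N := hn i
      exact_mod_cast this
    have h2 : ((n i:ℝ)+1)^s ≤ (N:ℝ)^s := Real.rpow_le_rpow h0 h1 (by linarith)
    have hnn : (0:ℝ) ≤ ((n i:ℝ)+1)^s := Real.rpow_nonneg h0 _
    have : ‖pt d s n i‖ = ((n i:ℝ)+1)^s := by
      show |((n i:ℝ)+1)^s| = _
      exact abs_of_nonneg hnn
    rw [this]
    exact pow_le_pow_left₀ hnn h2 2
  calc Real.sqrt (∑ i, ‖pt d s n i‖^2) ≤ Real.sqrt (∑ _i : Fin d, ((N:ℝ)^s)^2) :=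
        Real.sqrt_le_sqrt (Finset.sum_le_sum fun i _ => hb i)
    _ = Real.sqrt ((d:ℝ) * ((N:ℝ)^s)^2) := by
        rw [Finset.sum_const, Finset.card_univ, Fintype.card_fin, nsmul_eq_mul]
    _ = Real.sqrt d * (N:ℝ)^s := by
        rw [Real.sqrt_mul (by positivity), Real.sqrt_sq (Real.rpow_nonneg (by positivity) _)]

lemma vol_lower (d : ℕ) (hd : 1 ≤ d) {s : ℝ} (hs : 1 ≤ s) (N : ℕ) (hN : 1 ≤ N) :
    ((N^d : ℕ) : ℝ≥0∞) * (ENNReal.ofReal ((1/2:ℝ)^d) *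
        volume (ball (0:EuclideanSpace ℝ (Fin d)) 1))
      ≤ volume (Ebad d s ∩ ball (0 : EuclideanSpace ℝ (Fin d)) (2 * Real.sqrt d * (N:ℝ)^s)) := by
  haveI : Nontrivial (EuclideanSpace ℝ (Fin d)) := by
    refine Module.nontrivial_of_finrank_pos (R := ℝ) ?_
    rw [finrank_euclideanSpace_fin]; omega
  set R : ℝ := 2 * Real.sqrt d * (N:ℝ)^s with hR
  have hsqrt1 : (1:ℝ) ≤ Real.sqrt d := by
    rw [show (1:ℝ) = Real.sqrt 1 by simp]
    exact Real.sqrt_le_sqrt (by exact_mod_cast hd)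
  have hNs1 : (1:ℝ) ≤ (N:ℝ)^s := Real.one_le_rpow (by exact_mod_cast hN) (by linarith)
  set G : Finset (Fin d → ℕ) := Fintype.piFinset (fun _ : Fin d => Finset.range N) with hG
  have hGcard : G.card = N^d := by
    rw [hG, Fintype.card_piFinset]
    simp [Finset.card_range]
  have hdisj : (G : Set (Fin d → ℕ)).PairwiseDisjoint (fun n => ball (pt d s n) (1/2 : ℝ)) := by
    intro m _ n _ hmn
    exact ball_disjoint_ball (by linarith [pt_dist hs hmn])
  have hsub : ∀ n ∈ G, ball (pt d s n) (1/2:ℝ) ⊆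
      Ebad d s ∩ ball (0 : EuclideanSpace ℝ (Fin d)) R := by
    intro n hn z hz
    constructor
    · exact Set.mem_iUnion.2 ⟨n, hz⟩
    · rw [mem_ball_zero_iff]
      have h1 : ‖z - pt d s n‖ < 1/2 := by
        rw [← dist_eq_norm]; exact mem_ball.1 hz
      have h2 : ‖pt d s n‖ ≤ Real.sqrt d * (N:ℝ)^s := by
        apply pt_norm_le hs
        intro i
        have := Fintype.mem_piFinset.1 hn i
        simpa using this
      calc ‖z‖ = ‖pt d s n + (z - pt d s n)‖ := by rw [add_sub_cancel]
        _ ≤ ‖pt d s n‖ + ‖z - pt d s n‖ := norm_add_le _ _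
        _ < Real.sqrt d * (N:ℝ)^s + 1/2 := by linarith
        _ ≤ R := by
            rw [hR]
            nlinarith
  have hvol : ∀ n : Fin d → ℕ, volume (ball (pt d s n) (1/2:ℝ)) =
      ENNReal.ofReal ((1/2:ℝ)^d) * volume (ball (0:EuclideanSpace ℝ (Fin d)) 1) := by
    intro n
    rw [Measure.addHaar_ball volume _ (by norm_num : (0:ℝ) ≤ 1/2), finrank_euclideanSpace_fin]
  calc ((N^d : ℕ) : ℝ≥0∞) * (ENNReal.ofReal ((1/2:ℝ)^d) *
        volume (ball (0:EuclideanSpace ℝ (Fin d)) 1))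
      = ∑ n ∈ G, volume (ball (pt d s n) (1/2:ℝ)) := by
        rw [Finset.sum_congr rfl (fun n _ => hvol n), Finset.sum_const, hGcard, nsmul_eq_mul]
    _ = volume (⋃ n ∈ G, ball (pt d s n) (1/2:ℝ)) :=
        (measure_biUnion_finset hdisj (fun n _ => measurableSet_ball)).symm
    _ ≤ volume (Ebad d s ∩ ball (0 : EuclideanSpace ℝ (Fin d)) R) :=
        measure_mono (Set.iUnion₂_subset hsub)

lemma pow_rpow_key (d : ℕ) {x : ℝ} (hx : 0 < x) (e : ℝ) :
    (x ^ d) ^ e = x ^ ((d:ℝ) * e) := by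
  rw [← Real.rpow_natCast x d, ← Real.rpow_mul hx.le]

lemma real_calc_upper (d : ℕ) {p₁ q r : ℝ} (h0 : 0 < p₁) (h1 : p₁ < q) (hr : 0 < r) :
    (r ^ d) ^ (1/q) * ((9 * r ^ ((q - p₁)/q)) ^ d / r ^ d) ^ (1/p₁)
      = ((9:ℝ)^d) ^ (1/p₁) := by
  have hq : 0 < q := h0.trans h1
  set σ : ℝ := (q - p₁)/q with hσ
  have hrσ : (0:ℝ) < r ^ (σ - 1) := Real.rpow_pos_of_pos hr _
  have hu : (9 * r ^ σ) / r = 9 * r ^ (σ - 1) := by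
    rw [Real.rpow_sub hr, Real.rpow_one, mul_div_assoc]
  rw [← div_pow, hu, pow_rpow_key d hr, pow_rpow_key d (by positivity),
    pow_rpow_key d (by norm_num : (0:ℝ) < 9),
    Real.mul_rpow (by norm_num : (0:ℝ) ≤ 9) hrσ.le,
    ← Real.rpow_mul hr.le, ← mul_assoc,
    mul_comm (r ^ ((d:ℝ) * (1/q))) _, mul_assoc, ← Real.rpow_add hr]
  have he : (d:ℝ) * (1/q) + (σ - 1) * ((d:ℝ) * (1/p₁)) = 0 := by
    rw [hσ]; field_simp; ring
  rw [he, Real.rpow_zero, mul_one]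

lemma real_calc_lower (d : ℕ) {p₂ q N c s : ℝ} (hp₂ : 0 < p₂) (hq : 0 < q)
    (hN : 0 < N) (hc : 0 < c) :
    ((c * N^s) ^ d) ^ (1/q) * ((N/2)^d / (c*N^s)^d) ^ (1/p₂)
      = (c ^ ((d:ℝ)/q - (d:ℝ)/p₂) * (1/2:ℝ) ^ ((d:ℝ)/p₂)) *
          N ^ ((d:ℝ)/p₂ + ((d:ℝ)/q - (d:ℝ)/p₂)*s) := by
  have hNs : (0:ℝ) < N ^ s := Real.rpow_pos_of_pos hN _
  have hcN : (0:ℝ) < c * N ^ s := by positivity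
  have hN1s : (0:ℝ) < N ^ (1 - s) := Real.rpow_pos_of_pos hN _
  have hv : (N/2) / (c * N^s) = (1/2) * c⁻¹ * N^(1 - s) := by
    rw [Real.rpow_sub hN, Real.rpow_one]
    rw [div_eq_iff (by positivity : c * N ^ s ≠ 0)]
    field_simp
  rw [← div_pow, hv, pow_rpow_key d hcN, pow_rpow_key d (by positivity),
    Real.mul_rpow hc.le hNs.le, ← Real.rpow_mul hN.le,
    Real.mul_rpow (by positivity : (0:ℝ) ≤ (1/2) * c⁻¹) hN1s.le,
    Real.mul_rpow (by norm_num : (0:ℝ) ≤ (1/2:ℝ)) (by positivity : (0:ℝ) ≤ c⁻¹),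
    ← Real.rpow_mul hN.le, ← Real.rpow_neg_one c, ← Real.rpow_mul hc.le,
    show (d:ℝ)/p₂ + ((d:ℝ)/q - (d:ℝ)/p₂) * s
        = s * ((d:ℝ) * (1/q)) + (1 - s) * ((d:ℝ) * (1/p₂)) by ring,
    show (d:ℝ)/q - (d:ℝ)/p₂ = (d:ℝ) * (1/q) + -1 * ((d:ℝ) * (1/p₂)) by ring,
    show (d:ℝ)/p₂ = (d:ℝ) * (1/p₂) by ring,
    Real.rpow_add hc, Real.rpow_add hN]
  ring

-- the lintegral of an indicator-power
lemma lint_eq (d : ℕ) {E : Set (EuclideanSpace ℝ (Fin d))} (hE : MeasurableSet E)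
    {p : ℝ} (hp : p ≠ 0) (S : Set (EuclideanSpace ℝ (Fin d))) :
    (∫⁻ y in S, ENNReal.ofReal (|Set.indicator E (1 : EuclideanSpace ℝ (Fin d) → ℝ) y| ^ p))
      = volume (E ∩ S) := by
  have hfun : (fun y => ENNReal.ofReal (|Set.indicator E (1 : EuclideanSpace ℝ (Fin d) → ℝ) y| ^ p)) =
      Set.indicator E (fun _ => (1:ℝ≥0∞)) := by
    funext y
    by_cases hy : y ∈ E
    · simp [Set.indicator_of_mem hy, Real.one_rpow]
    · simp [Set.indicator_of_notMem hy, Real.zero_rpow hp]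
  rw [hfun, lintegral_indicator hE, setLIntegral_one, Measure.restrict_apply hE]


lemma morrey_fin (d : ℕ) (hd : 1 ≤ d) {p₁ q : ℝ} (hp₁ : 1 ≤ p₁) (hq : p₁ < q) :
    morreyNorm d p₁ q (Set.indicator (Ebad d (q/(q-p₁))) 1) < ⊤ := by
  have hp₁0 : 0 < p₁ := lt_of_lt_of_le one_pos hp₁
  have hq0 : 0 < q := hp₁0.trans hq
  have hqp : 0 < q - p₁ := by linarith
  set s : ℝ := q/(q-p₁) with hs_def
  have hs : 1 ≤ s := by
    rw [hs_def, le_div_iff₀ hqp]; linarith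
  have h1s : 1/s = (q-p₁)/q := by rw [hs_def, one_div_div]
  haveI : Nontrivial (EuclideanSpace ℝ (Fin d)) := by
    refine Module.nontrivial_of_finrank_pos (R := ℝ) ?_
    rw [finrank_euclideanSpace_fin]; omega
  set κ : ℝ≥0∞ := volume (ball (0 : EuclideanSpace ℝ (Fin d)) 1) with hκ
  have hκ0 : κ ≠ 0 := (measure_ball_pos volume 0 one_pos).ne'
  have hκt : κ ≠ ⊤ := measure_ball_lt_top.ne
  set C : ℝ≥0∞ := κ ^ (1/q) * (1 ⊔ ENNReal.ofReal (((9:ℝ)^d) ^ (1/p₁))) with hC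
  have hCfin : C < ⊤ := by
    rw [hC]
    apply ENNReal.mul_lt_top
    · exact ENNReal.rpow_lt_top_of_nonneg (by positivity) hκt
    · exact sup_lt_iff.2 ⟨one_lt_top, ofReal_lt_top⟩
  refine lt_of_le_of_lt ?_ hCfin
  rw [morreyNorm]
  refine iSup_le fun a => iSup_le fun r => iSup_le fun hr => ?_
  rw [lint_eq d (Ebad_meas d s) hp₁0.ne' (ball a r)]
  have hV : volume (ball a r) = ENNReal.ofReal (r^d) * κ := by
    rw [hκ, Measure.addHaar_ball volume a hr.le, finrank_euclideanSpace_fin]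
  rcases le_total r 1 with hr1 | hr1
  · -- small radius : density at most 1
    have hIV : volume (Ebad d s ∩ ball a r) ≤ volume (ball a r) :=
      measure_mono Set.inter_subset_right
    have hVt : volume (ball a r) ≠ ⊤ := measure_ball_lt_top.ne
    have h2 : (volume (ball a r))⁻¹ * volume (Ebad d s ∩ ball a r) ≤ 1 := by
      rcases eq_or_ne (volume (ball a r)) 0 with h0 | h0
      · have h00 : volume (Ebad d s ∩ ball a r) = 0 :=
          le_antisymm (h0 ▸ hIV) zero_le
        simp [h00]
      · calc (volume (ball a r))⁻¹ * volume (Ebad d s ∩ ball a r)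
            ≤ (volume (ball a r))⁻¹ * volume (ball a r) := mul_le_mul_right hIV _
          _ = 1 := ENNReal.inv_mul_cancel h0 hVt
    have h3 : volume (ball a r) ≤ κ := by
      rw [hV]
      calc ENNReal.ofReal (r^d) * κ ≤ 1 * κ := by
            apply mul_le_mul_left
            exact ENNReal.ofReal_le_one.2 (pow_le_one₀ hr.le hr1)
        _ = κ := one_mul κ
    calc volume (ball a r) ^ (1/q) *
          ((volume (ball a r))⁻¹ * volume (Ebad d s ∩ ball a r)) ^ (1/p₁)
        ≤ volume (ball a r) ^ (1/q) * 1 :=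
          mul_le_mul_right (ENNReal.rpow_le_one h2 (by positivity)) _
      _ = volume (ball a r) ^ (1/q) := mul_one _
      _ ≤ κ ^ (1/q) := ENNReal.rpow_le_rpow h3 (by positivity)
      _ ≤ C := by
          rw [hC]
          exact le_mul_of_one_le_right' le_sup_left
  · -- large radius : use the counting bound
    have hr0 : (0:ℝ) < r := hr
    have hrd : (0:ℝ) < r^d := by positivity
    have hI := vol_upper d hs a hr1
    rw [h1s] at hI
    set B : ℝ≥0∞ := ENNReal.ofReal ((9 * r ^ ((q-p₁)/q))^d) with hB
    have h2 : (volume (ball a r))⁻¹ * volume (Ebad d s ∩ ball a r)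
        ≤ ENNReal.ofReal ((9 * r ^ ((q-p₁)/q))^d / r^d) := by
      rw [hV, ENNReal.mul_inv (Or.inl (by
          simp only [ne_eq, ENNReal.ofReal_eq_zero, not_le]; exact hrd))
        (Or.inl ENNReal.ofReal_ne_top)]
      calc (ENNReal.ofReal (r^d))⁻¹ * κ⁻¹ * volume (Ebad d s ∩ ball a r)
          ≤ (ENNReal.ofReal (r^d))⁻¹ * κ⁻¹ * (B * κ) := mul_le_mul_right hI _
        _ = (ENNReal.ofReal (r^d))⁻¹ * B * (κ⁻¹ * κ) := by ring
        _ = (ENNReal.ofReal (r^d))⁻¹ * B := by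
            rw [ENNReal.inv_mul_cancel hκ0 hκt, mul_one]
        _ = ENNReal.ofReal ((9 * r ^ ((q-p₁)/q))^d / r^d) := by
            rw [ENNReal.ofReal_div_of_pos hrd, div_eq_mul_inv, mul_comm, hB]
    calc volume (ball a r) ^ (1/q) *
          ((volume (ball a r))⁻¹ * volume (Ebad d s ∩ ball a r)) ^ (1/p₁)
        ≤ (ENNReal.ofReal (r^d) * κ) ^ (1/q) *
            (ENNReal.ofReal ((9 * r ^ ((q-p₁)/q))^d / r^d)) ^ (1/p₁) := by
          rw [← hV]
          exact mul_le_mul_right (ENNReal.rpow_le_rpow h2 (by positivity)) _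
      _ = ENNReal.ofReal (((9:ℝ)^d) ^ (1/p₁)) * κ ^ (1/q) := by
          rw [ENNReal.mul_rpow_of_nonneg _ _ (by positivity : (0:ℝ) ≤ 1/q),
            ENNReal.ofReal_rpow_of_pos hrd,
            ENNReal.ofReal_rpow_of_pos (by positivity),
            mul_comm (ENNReal.ofReal ((r^d) ^ (1/q))) (κ ^ (1/q)), mul_assoc,
            ← ENNReal.ofReal_mul (by positivity),
            real_calc_upper d hp₁0 hq hr0, mul_comm]
      _ ≤ C := by
          rw [hC, mul_comm]
          exact mul_le_mul_right le_sup_right _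

lemma morrey_top (d : ℕ) (hd : 1 ≤ d) {p₁ p₂ q : ℝ} (hp₁ : 1 ≤ p₁) (hp₁₂ : p₁ < p₂)
    (hp₂q : p₂ < q) :
    morreyNorm d p₂ q (Set.indicator (Ebad d (q/(q-p₁))) 1) = ⊤ := by
  have hp₁0 : 0 < p₁ := lt_of_lt_of_le one_pos hp₁
  have hp₂0 : 0 < p₂ := hp₁0.trans hp₁₂
  have hq0 : 0 < q := hp₂0.trans hp₂q
  have hqp : 0 < q - p₁ := by linarith
  set s : ℝ := q/(q-p₁) with hs_def
  have hs : 1 ≤ s := by rw [hs_def, le_div_iff₀ hqp]; linarith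
  haveI : Nontrivial (EuclideanSpace ℝ (Fin d)) := by
    refine Module.nontrivial_of_finrank_pos (R := ℝ) ?_
    rw [finrank_euclideanSpace_fin]; omega
  set κ : ℝ≥0∞ := volume (ball (0 : EuclideanSpace ℝ (Fin d)) 1) with hκ
  have hκ0 : κ ≠ 0 := (measure_ball_pos volume 0 one_pos).ne'
  have hκt : κ ≠ ⊤ := measure_ball_lt_top.ne
  have hd0 : (0:ℝ) < d := by exact_mod_cast hd
  set e : ℝ := (d:ℝ)/p₂ + ((d:ℝ)/q - (d:ℝ)/p₂) * s with he_def
  have hepos : 0 < e := by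
    have hee : e = (d:ℝ)*(p₂ - p₁)/(p₂*(q-p₁)) := by
      rw [he_def, hs_def]; field_simp; ring
    rw [hee]
    have h1 : (0:ℝ) < p₂ - p₁ := by linarith
    positivity
  set c : ℝ := 2 * Real.sqrt d with hc_def
  have hcpos : 0 < c := by
    rw [hc_def]; positivity
  set cd : ℝ := c ^ ((d:ℝ)/q - (d:ℝ)/p₂) * (1/2:ℝ) ^ ((d:ℝ)/p₂) with hcd_def
  have hcdpos : 0 < cd := by
    rw [hcd_def]
    have h1 := Real.rpow_pos_of_pos hcpos ((d:ℝ)/q - (d:ℝ)/p₂)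
    have h2 := Real.rpow_pos_of_pos (by norm_num : (0:ℝ) < 1/2) ((d:ℝ)/p₂)
    positivity
  set c₀ : ℝ≥0∞ := κ^(1/q) * ENNReal.ofReal cd with hc₀_def
  have hc₀0 : c₀ ≠ 0 := by
    rw [hc₀_def]
    apply mul_ne_zero
    · exact (ENNReal.rpow_pos (zero_lt_iff.2 hκ0) hκt).ne'
    · simp only [ne_eq, ENNReal.ofReal_eq_zero, not_le]; exact hcdpos
  have claim : ∀ N : ℕ, 1 ≤ N →
      c₀ * ENNReal.ofReal ((N:ℝ)^e) ≤
        morreyNorm d p₂ q (Set.indicator (Ebad d s) 1) := by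
    intro N hN
    have hN0 : (0:ℝ) < N := by exact_mod_cast hN
    have hNs : (0:ℝ) < (N:ℝ)^s := Real.rpow_pos_of_pos hN0 _
    set R : ℝ := c * (N:ℝ)^s with hR_def
    have hR0 : 0 < R := by rw [hR_def]; positivity
    have hRd : (0:ℝ) < R^d := by positivity
    have hV : volume (ball (0 : EuclideanSpace ℝ (Fin d)) R) = ENNReal.ofReal (R^d) * κ := by
      rw [hκ, Measure.addHaar_ball volume _ hR0.le, finrank_euclideanSpace_fin]
    have hVlow := vol_lower d hd hs N hN
    rw [show 2 * Real.sqrt d * (N:ℝ)^s = R by rw [hR_def, hc_def]] at hVlow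
    have hcast : ((N^d : ℕ) : ℝ≥0∞) = ENNReal.ofReal ((N:ℝ)^d) := by
      rw [← ENNReal.ofReal_natCast]
      congr 1
      push_cast
      ring
    have hlow : ENNReal.ofReal (((N:ℝ)/2)^d / R^d) ≤
        (volume (ball (0 : EuclideanSpace ℝ (Fin d)) R))⁻¹ *
          volume (Ebad d s ∩ ball (0 : EuclideanSpace ℝ (Fin d)) R) := by
      have hVinv : (volume (ball (0 : EuclideanSpace ℝ (Fin d)) R))⁻¹
          = (ENNReal.ofReal (R^d))⁻¹ * κ⁻¹ := by
        rw [hV, ENNReal.mul_inv (Or.inl (by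
            simp only [ne_eq, ENNReal.ofReal_eq_zero, not_le]; exact hRd))
          (Or.inl ENNReal.ofReal_ne_top)]
      have heq : ENNReal.ofReal (((N:ℝ)/2)^d / R^d)
          = (ENNReal.ofReal (R^d))⁻¹ * κ⁻¹ *
              (((N^d : ℕ) : ℝ≥0∞) * (ENNReal.ofReal ((1/2:ℝ)^d) * κ)) := by
        rw [hcast]
        calc ENNReal.ofReal (((N:ℝ)/2)^d / R^d)
            = ENNReal.ofReal ((N:ℝ)^d * (1/2:ℝ)^d) * (ENNReal.ofReal (R^d))⁻¹ := by
              rw [ENNReal.ofReal_div_of_pos hRd, div_eq_mul_inv]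
              congr 2
              rw [← mul_pow]
              congr 1
              ring
          _ = ENNReal.ofReal ((N:ℝ)^d) * ENNReal.ofReal ((1/2:ℝ)^d) *
                (ENNReal.ofReal (R^d))⁻¹ * (κ⁻¹ * κ) := by
              rw [ENNReal.ofReal_mul (by positivity), ENNReal.inv_mul_cancel hκ0 hκt, mul_one]
          _ = _ := by ring
      rw [heq, hVinv]
      exact mul_le_mul_right hVlow _
    have hterm : volume (ball (0 : EuclideanSpace ℝ (Fin d)) R) ^ (1/q) *
        ((volume (ball (0 : EuclideanSpace ℝ (Fin d)) R))⁻¹ *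
          volume (Ebad d s ∩ ball (0 : EuclideanSpace ℝ (Fin d)) R)) ^ (1/p₂) ≤
        morreyNorm d p₂ q (Set.indicator (Ebad d s) 1) := by
      rw [morreyNorm]
      refine le_iSup_of_le (0 : EuclideanSpace ℝ (Fin d)) (le_iSup_of_le R (le_iSup_of_le hR0 ?_))
      rw [lint_eq d (Ebad_meas d s) hp₂0.ne' (ball (0 : EuclideanSpace ℝ (Fin d)) R)]
    refine le_trans ?_ hterm
    have hreal : (R^d)^(1/q) * (((N:ℝ)/2)^d / R^d)^(1/p₂) = cd * (N:ℝ)^e := by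
      rw [hR_def, hcd_def, he_def]
      exact real_calc_lower d hp₂0 hq0 hN0 hcpos
    calc c₀ * ENNReal.ofReal ((N:ℝ)^e)
        = (ENNReal.ofReal (R^d) * κ) ^ (1/q) *
            (ENNReal.ofReal (((N:ℝ)/2)^d / R^d)) ^ (1/p₂) := by
          rw [hc₀_def, mul_assoc (κ ^ (1/q)), ← ENNReal.ofReal_mul hcdpos.le, ← hreal,
            ENNReal.ofReal_mul (by positivity : (0:ℝ) ≤ (R^d)^(1/q)),
            ENNReal.mul_rpow_of_nonneg _ _ (by positivity : (0:ℝ) ≤ 1/q),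
            ENNReal.ofReal_rpow_of_pos hRd, ENNReal.ofReal_rpow_of_pos (by positivity)]
          ring
      _ ≤ volume (ball (0 : EuclideanSpace ℝ (Fin d)) R) ^ (1/q) *
            ((volume (ball (0 : EuclideanSpace ℝ (Fin d)) R))⁻¹ *
              volume (Ebad d s ∩ ball (0 : EuclideanSpace ℝ (Fin d)) R)) ^ (1/p₂) := by
          rw [hV] at hlow ⊢
          exact mul_le_mul_right
            (ENNReal.rpow_le_rpow hlow (show (0:ℝ) ≤ 1/p₂ by positivity)) _
  have hsup : (⨆ N : ℕ, ENNReal.ofReal ((((N+1 : ℕ)):ℝ)^e)) = ⊤ := by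
    rw [iSup_eq_top]
    intro b hb
    obtain ⟨N, hNgt⟩ := exists_nat_gt ((max b.toReal 0 + 1) ^ (1/e))
    refine ⟨N, ?_⟩
    rw [ENNReal.lt_ofReal_iff_toReal_lt hb.ne]
    have h0 : (0:ℝ) ≤ max b.toReal 0 + 1 := by positivity
    have h2 : ((max b.toReal 0 + 1) ^ (1/e)) ^ e ≤ (((N+1 : ℕ)):ℝ)^e := by
      apply Real.rpow_le_rpow (Real.rpow_nonneg h0 _) _ hepos.le
      push_cast
      linarith
    rw [← Real.rpow_mul h0, one_div_mul_cancel hepos.ne', Real.rpow_one] at h2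
    have h3 : b.toReal ≤ max b.toReal 0 := le_max_left _ _
    linarith
  apply top_unique
  calc (⊤:ℝ≥0∞) = c₀ * ⊤ := (ENNReal.mul_top hc₀0).symm
    _ = c₀ * ⨆ N : ℕ, ENNReal.ofReal ((((N+1 : ℕ)):ℝ)^e) := by rw [hsup]
    _ = ⨆ N : ℕ, c₀ * ENNReal.ofReal ((((N+1 : ℕ)):ℝ)^e) := by rw [ENNReal.mul_iSup]
    _ ≤ morreyNorm d p₂ q (Set.indicator (Ebad d s) 1) :=
        iSup_le fun N => claim (N+1) (by omega)


/-- If `1 ≤ p₁ < p₂ < q < ∞`, the inclusion `wM^{p₂}_q ⊆ M^{p₁}_q` is proper: there is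
a measurable `f` with `‖f‖_{M^{p₁}_q} < ∞` and `‖f‖_{wM^{p₂}_q} = ∞`. -/
theorem weakMorrey_subset_morrey_proper (d : ℕ) (hd : 1 ≤ d) (p₁ p₂ q : ℝ)
    (hp₁ : 1 ≤ p₁) (hp₁₂ : p₁ < p₂) (hp₂q : p₂ < q) :
    ∃ f : EuclideanSpace ℝ (Fin d) → ℝ, Measurable f ∧
      morreyNorm d p₁ q f < ⊤ ∧ weakMorreyNorm d p₂ q f = ⊤ := by
  set s : ℝ := q/(q-p₁) with hs_def
  refine ⟨Set.indicator (Ebad d s) 1, ?_, ?_, ?_⟩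
  · exact measurable_one.indicator (Ebad_meas d s)
  · exact morrey_fin d hd hp₁ (lt_trans hp₁₂ hp₂q)
  · apply top_unique
    have hset : {x : EuclideanSpace ℝ (Fin d) |
        (1/2 : ℝ) < |Set.indicator (Ebad d s) (1 : EuclideanSpace ℝ (Fin d) → ℝ) x|}
          = Ebad d s := by
      ext x
      by_cases hx : x ∈ Ebad d s
      · simp only [Set.mem_setOf_eq, Set.indicator_of_mem hx, Pi.one_apply, hx, iff_true]
        norm_num
      · simp only [Set.mem_setOf_eq, Set.indicator_of_notMem hx, hx, iff_false, abs_zero]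
        norm_num
    calc (⊤:ℝ≥0∞)
        = ENNReal.ofReal (1/2) * morreyNorm d p₂ q (Set.indicator (Ebad d s) 1) := by
          rw [morrey_top d hd hp₁ hp₁₂ hp₂q, ENNReal.mul_top (by norm_num)]
      _ ≤ weakMorreyNorm d p₂ q (Set.indicator (Ebad d s) 1) := by
          rw [weakMorreyNorm]
          refine le_iSup_of_le (1/2 : ℝ) (le_iSup_of_le (by norm_num) ?_)
          rw [hset]
end
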